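/- arXiv:1703.09477 — 7 statements merged into one kernel-verified Lean document; each statement's English description precedes it below -/
import Mathlib

section
/- Let f ∈ Γ₀(X) with argmin f ≠ ∅, Ω ⊂ X, and p ∈ [1, ∞). If ∂f is p-metrically subregular on Ω with constant γ > 0, then f satisfies the p-Łojasiewicz inequality on Ω with constant c = γ^{-1/p}: (f(x) - inf f)^{1 - 1/p} ≤ c·‖∂f(x)‖₋ for all x ∈ Ω ∩ dom f. -/
open Set Metric
open scoped ENNReal

variable {X : Type*} [NormedAddCommGroup X] [InnerProductSpace ℝ X] [CompleteSpace X]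

/-- The Fenchel subdifferential of `f` at `x`. -/
def fsubdiff (f : X → ℝ) (x : X) : Set X := {v | ∀ y, f x + (inner ℝ v (y - x) : ℝ) ≤ f y}

/-- `‖∂f(x)‖₋`: the infimum of the norms of the subgradients of `f` at `x`
(`∞` if the subdifferential is empty). -/
noncomputable def dnorm (f : X → ℝ) (x : X) : ℝ≥0∞ :=
  ⨅ v ∈ fsubdiff f x, (‖v‖₊ : ℝ≥0∞)

lemma auxreal (a d n γ p : ℝ) (ha : 0 ≤ a) (hd : 0 ≤ d) (hn : 0 ≤ n) (hγ : 0 < γ)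
    (hp : 1 ≤ p) (h1 : a ≤ n * d) (h2 : γ * d ^ (p - 1) ≤ n) :
    a ^ (1 - 1/p) ≤ γ ^ (-(1:ℝ)/p) * n := by
  have hp0 : (0:ℝ) < p := lt_of_lt_of_le one_pos hp
  rcases eq_or_lt_of_le hn with h0 | h0
  · -- n = 0
    rcases eq_or_lt_of_le hp with hp1 | hp1
    · exfalso
      rw [← hp1] at h2
      simp [Real.rpow_zero] at h2
      linarith [h2.trans h0.symm.le]
    · have hdp : d ^ (p - 1) = 0 :=
        le_antisymm (by nlinarith) (Real.rpow_nonneg hd _)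
      have hd0 : d = 0 :=
        (Real.rpow_eq_zero hd (by intro hc; linarith)).mp hdp
      have ha0 : a = 0 := le_antisymm (by rw [← h0, hd0] at h1; simpa using h1) ha
      rw [ha0, Real.zero_rpow (by
        have : 1/p < 1 := by rw [div_lt_one hp0]; exact hp1
        linarith), ← h0, mul_zero]
  · have he : (0:ℝ) ≤ 1 - 1/p := by
      have : 1/p ≤ 1 := by rw [div_le_one hp0]; exact hp
      linarith
    have e1 : a ^ (1 - 1/p) ≤ (n * d) ^ (1 - 1/p) := Real.rpow_le_rpow ha h1 he
    have e2 : (n * d) ^ (1 - 1/p) = n ^ (1 - 1/p) * d ^ (1 - 1/p) :=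
      Real.mul_rpow h0.le hd
    have e3 : d ^ (1 - 1/p) = (d ^ (p - 1)) ^ (1/p) := by
      rw [← Real.rpow_mul hd]
      congr 1
      field_simp
    have e4 : (d ^ (p - 1)) ^ (1/p) ≤ (n / γ) ^ (1/p) := by
      apply Real.rpow_le_rpow (Real.rpow_nonneg hd _) _ (by positivity)
      rw [le_div_iff₀ hγ]
      linarith [mul_comm γ (d ^ (p-1))]
    have e5 : (n / γ) ^ (1/p) = n ^ (1/p) * γ ^ (-(1:ℝ)/p) := by
      rw [Real.div_rpow hn hγ.le, div_eq_mul_inv, ← Real.rpow_neg hγ.le, neg_div]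
    calc a ^ (1 - 1/p) ≤ n ^ (1 - 1/p) * d ^ (1 - 1/p) := by rw [← e2]; exact e1
      _ ≤ n ^ (1 - 1/p) * (n ^ (1/p) * γ ^ (-(1:ℝ)/p)) := by
          rw [e3] at *
          exact mul_le_mul_of_nonneg_left (e4.trans_eq e5) (Real.rpow_nonneg h0.le _)
      _ = γ ^ (-(1:ℝ)/p) * n := by
          rw [← mul_assoc, ← Real.rpow_add h0]
          ring_nf
          rw [Real.rpow_one]
          ring

/-- If `∂f` is `p`-metrically subregular on `Ω` with constant `γ`, then `f` is
`p`-Łojasiewicz on `Ω` with constant `c = γ^(-1/p)`. -/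
theorem stmt2 (f : X → ℝ) (hconv : ConvexOn ℝ univ f)
    (hlsc : LowerSemicontinuous f) (Ω : Set X) (p γ : ℝ) (hp : 1 ≤ p) (hγ : 0 < γ)
    (hmin : {z : X | ∀ y, f z ≤ f y}.Nonempty)
    (hsub : ∀ x ∈ Ω, ENNReal.ofReal (γ * infDist x {z : X | ∀ y, f z ≤ f y} ^ (p - 1))
      ≤ dnorm f x) :
    ∀ x ∈ Ω, ENNReal.ofReal ((f x - ⨅ y, f y) ^ (1 - 1/p))
      ≤ ENNReal.ofReal (γ ^ (-(1:ℝ)/p)) * dnorm f x := by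
  intro x hx
  obtain ⟨z₀, hz₀⟩ := hmin
  have hbdd : BddBelow (Set.range f) := ⟨f z₀, by rintro _ ⟨y, rfl⟩; exact hz₀ y⟩
  have hinf : (⨅ y, f y) = f z₀ := le_antisymm (ciInf_le hbdd z₀) (le_ciInf hz₀)
  have hF0 : 0 ≤ f x - ⨅ y, f y := by rw [hinf]; linarith [hz₀ x]
  have hc : (0:ℝ) < γ ^ (-(1:ℝ)/p) := Real.rpow_pos_of_pos hγ _
  by_cases hS : (fsubdiff f x).Nonempty
  · have key : ∀ v ∈ fsubdiff f x,
        ENNReal.ofReal ((f x - ⨅ y, f y) ^ (1 - 1/p))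
          ≤ ENNReal.ofReal (γ ^ (-(1:ℝ)/p)) * (‖v‖₊ : ℝ≥0∞) := by
      intro v hv
      have hdn : dnorm f x ≤ (‖v‖₊ : ℝ≥0∞) := iInf₂_le v hv
      have h2 : γ * infDist x {z : X | ∀ y, f z ≤ f y} ^ (p - 1) ≤ ‖v‖ := by
        have := (hsub x hx).trans hdn
        rw [← enorm_eq_nnnorm, ← ofReal_norm] at this
        exact (ENNReal.ofReal_le_ofReal_iff (norm_nonneg v)).mp this
      have hz : ∀ z ∈ {z : X | ∀ y, f z ≤ f y},
          f x - (⨅ y, f y) ≤ ‖v‖ * dist x z := by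
        intro z hzm
        have hfz : (⨅ y, f y) = f z := le_antisymm (ciInf_le hbdd z) (le_ciInf hzm)
        have hsv := hv z
        have hi : (inner ℝ v (z - x) : ℝ) = -(inner ℝ v (x - z) : ℝ) := by
          rw [← inner_neg_right]; congr 1; abel
        have hcs : (inner ℝ v (x - z) : ℝ) ≤ ‖v‖ * ‖x - z‖ := real_inner_le_norm v _
        rw [hfz, dist_eq_norm]
        rw [hi] at hsv
        linarith
      have h1 : f x - (⨅ y, f y) ≤ ‖v‖ * infDist x {z : X | ∀ y, f z ≤ f y} := by
        rcases eq_or_lt_of_le (norm_nonneg v) with h0 | h0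
        · have := hz z₀ hz₀
          rw [← h0] at this ⊢
          simpa using this
        · rw [mul_comm, ← div_le_iff₀ h0]
          refine le_of_not_gt fun hlt => ?_
          obtain ⟨z, hzm, hzd⟩ := (infDist_lt_iff ⟨z₀, hz₀⟩).mp hlt
          have h1 := hz z hzm
          have h3 : (f x - ⨅ y, f y) / ‖v‖ ≤ dist x z := by
            rw [div_le_iff₀ h0, mul_comm]; exact h1
          exact absurd hzd (not_lt.mpr h3)
      have := auxreal _ _ _ _ _ hF0 infDist_nonneg (norm_nonneg v) hγ hp h1 h2
      calc ENNReal.ofReal ((f x - ⨅ y, f y) ^ (1 - 1/p))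
          ≤ ENNReal.ofReal (γ ^ (-(1:ℝ)/p) * ‖v‖) := ENNReal.ofReal_le_ofReal this
        _ = ENNReal.ofReal (γ ^ (-(1:ℝ)/p)) * ENNReal.ofReal ‖v‖ :=
            ENNReal.ofReal_mul hc.le
        _ = ENNReal.ofReal (γ ^ (-(1:ℝ)/p)) * (‖v‖₊ : ℝ≥0∞) := by
            rw [ofReal_norm, enorm_eq_nnnorm]
    have : Nonempty (fsubdiff f x) := hS.to_subtype
    have heq : dnorm f x = ⨅ v : fsubdiff f x, ((‖(v:X)‖₊ : ℝ≥0∞)) := by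
      rw [dnorm, iInf_subtype]
    rw [heq, ENNReal.mul_iInf_of_ne (by simp [hc]) ENNReal.ofReal_ne_top]
    exact le_iInf fun v => key v v.2
  · have : fsubdiff f x = ∅ := not_nonempty_iff_eq_empty.mp hS
    rw [dnorm, this]
    simp [ENNReal.mul_top, (ENNReal.ofReal_pos.mpr hc).ne']
end

section
/- Let A : X → Y be a bounded linear operator between Hilbert spaces with σ := inf of the nonzero spectrum of A*A strictly positive, y ∈ range A, and f(x) = (1/2)‖Ax - y‖². Then f is globally 2-conditioned with constant σ: for all x ∈ X, (σ/2)·dist(x, argmin f)² ≤ f(x) - inf f. -/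
set_option maxHeartbeats 1000000

open Set Metric ContinuousLinearMap

variable {X : Type*} [NormedAddCommGroup X] [InnerProductSpace ℝ X] [CompleteSpace X]
variable {Y : Type*} [NormedAddCommGroup Y] [InnerProductSpace ℝ Y] [CompleteSpace Y]

local notation "⟪" x ", " y "⟫" => @inner ℝ _ _ x y

lemma symmAux {P : X →L[ℝ] X} (hP : IsSelfAdjoint P) (a b : X) : ⟪P a, b⟫ = ⟪a, P b⟫ := by
  have hadj : ContinuousLinearMap.adjoint P = P := hP
  rw [← hadj, ContinuousLinearMap.adjoint_inner_left, hadj]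

-- generalized Cauchy-Schwarz for positive selfadjoint operators
lemma genCS {P : X →L[ℝ] X} (hP : IsSelfAdjoint P) (hpos : ∀ v, 0 ≤ ⟪P v, v⟫) (u : X) :
    ‖P u‖ ^ 2 * ‖P u‖ ^ 2 ≤ (‖P‖ * ‖P u‖ ^ 2) * ⟪P u, u⟫ := by
  have hq : ∀ s : ℝ, 0 ≤ ⟪P (P u), P u⟫ * (s * s) + (2 * ⟪P u, P u⟫) * s + ⟪P u, u⟫ := by
    intro s
    have h0 := hpos (u + s • (P u))
    have expand : ⟪P (u + s • P u), u + s • P u⟫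
        = ⟪P (P u), P u⟫ * (s * s) + (2 * ⟪P u, P u⟫) * s + ⟪P u, u⟫ := by
      rw [map_add, map_smul]
      simp only [inner_add_left, inner_add_right, real_inner_smul_left, real_inner_smul_right]
      rw [symmAux hP (P u) u]; ring
    linarith [expand ▸ h0]
  have hd := discrim_le_zero hq
  rw [discrim] at hd
  have h1 : ⟪P u, P u⟫ = ‖P u‖ ^ 2 := real_inner_self_eq_norm_sq (P u)
  have h2 : ⟪P (P u), P u⟫ ≤ ‖P‖ * ‖P u‖ ^ 2 := by
    calc ⟪P (P u), P u⟫ ≤ ‖P (P u)‖ * ‖P u‖ := real_inner_le_norm _ _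
      _ ≤ (‖P‖ * ‖P u‖) * ‖P u‖ := by
          have := P.le_opNorm (P u); nlinarith [norm_nonneg (P u)]
      _ = ‖P‖ * ‖P u‖ ^ 2 := by ring
  have h3 : 0 ≤ ⟪P u, u⟫ := hpos u
  nlinarith [hd, h1, h2, h3]

/-- A selfadjoint operator whose spectrum contains no negative reals is positive. -/
lemma posOfSpec {M : X →L[ℝ] X} (hM : IsSelfAdjoint M)
    (h : ∀ μ : ℝ, μ < 0 → IsUnit (algebraMap ℝ (X →L[ℝ] X) μ - M)) :
    ∀ u : X, 0 ≤ ⟪M u, u⟫ := by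
  by_contra hcon
  push_neg at hcon
  obtain ⟨u, hu⟩ := hcon
  have hu0 : u ≠ 0 := by rintro rfl; simp at hu
  set u₀ : X := ‖u‖⁻¹ • u with hu₀def
  have hnu : ‖u₀‖ = 1 := by
    rw [hu₀def, norm_smul, norm_inv, norm_norm, inv_mul_cancel₀ (norm_ne_zero_iff.mpr hu0)]
  have hu₀neg : ⟪M u₀, u₀⟫ < 0 := by
    rw [hu₀def, map_smul, real_inner_smul_left, real_inner_smul_right]
    have hn : (0:ℝ) < ‖u‖ := norm_pos_iff.mpr hu0
    have : (0:ℝ) < ‖u‖⁻¹ := inv_pos.mpr hn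
    nlinarith [mul_pos (mul_pos this this) (neg_pos.mpr hu)]
  set S : Set ℝ := (fun v => ⟪M v, v⟫) '' {v : X | ‖v‖ = 1} with hSdef
  have hmemS : ∀ v : X, ‖v‖ = 1 → ⟪M v, v⟫ ∈ S := fun v hv => ⟨v, hv, rfl⟩
  have hSne : S.Nonempty := ⟨_, hmemS u₀ hnu⟩
  have hSbdd : BddBelow S := by
    refine ⟨-‖M‖, ?_⟩
    rintro r ⟨v, hv, rfl⟩
    have h1 : |⟪M v, v⟫| ≤ ‖M v‖ * ‖v‖ := abs_real_inner_le_norm _ _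
    have h2 : ‖M v‖ ≤ ‖M‖ * ‖v‖ := M.le_opNorm v
    rw [Set.mem_setOf_eq] at hv
    rw [hv] at h1 h2
    simp only [mul_one] at h1 h2
    cases abs_le.mp h1 with | intro hl hr => linarith
  set c : ℝ := sInf S with hcdef
  have hcneg : c < 0 := lt_of_le_of_lt (csInf_le hSbdd (hmemS u₀ hnu)) hu₀neg
  obtain ⟨V, hV⟩ := h c hcneg
  set B : X →L[ℝ] X := ↑V⁻¹ with hBdef
  set P : X →L[ℝ] X := M - c • (1 : X →L[ℝ] X) with hPdef
  have hBP : ∀ v : X, B (P v) = -v := by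
    intro v
    have h1 : B * (algebraMap ℝ (X →L[ℝ] X) c - M) = 1 := by rw [hBdef, ← hV]; exact V.inv_mul
    have h2 : P = -(algebraMap ℝ (X →L[ℝ] X) c - M) := by
      rw [hPdef, Algebra.algebraMap_eq_smul_one]; abel
    calc B (P v) = (B * P) v := (ContinuousLinearMap.mul_apply _ _ _).symm
      _ = (-(B * (algebraMap ℝ (X →L[ℝ] X) c - M))) v := by rw [h2, mul_neg]
      _ = -((B * (algebraMap ℝ (X →L[ℝ] X) c - M)) v) := ContinuousLinearMap.neg_apply _ _
      _ = -v := by rw [h1, ContinuousLinearMap.one_apply]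
  have hPapp : ∀ v : X, P v = M v - c • v := by
    intro v; rw [hPdef]; simp
  have hPsa : IsSelfAdjoint P := by
    refine hM.sub ?_
    rw [IsSelfAdjoint]
    simp [star_smul]
  have hPpos : ∀ v : X, 0 ≤ ⟪P v, v⟫ := by
    intro v
    rcases eq_or_ne v 0 with rfl | hv0
    · simp
    · have hnv : ‖(‖v‖⁻¹ • v : X)‖ = 1 := by
        rw [norm_smul, norm_inv, norm_norm, inv_mul_cancel₀ (norm_ne_zero_iff.mpr hv0)]
      have := csInf_le hSbdd (hmemS _ hnv)
      rw [map_smul, real_inner_smul_left, real_inner_smul_right] at this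
      rw [hPapp, inner_sub_left, real_inner_smul_left, real_inner_self_eq_norm_sq]
      have hn2 : (0:ℝ) < ‖v‖ := norm_pos_iff.mpr hv0
      rw [← hcdef] at this
      have hinv : ‖v‖⁻¹ * ‖v‖ = 1 := inv_mul_cancel₀ hn2.ne'
      have key : c * ‖v‖ ^ 2 ≤ ⟪M v, v⟫ := by
        have h2' := mul_le_mul_of_nonneg_left this (le_of_lt (mul_pos hn2 hn2))
        calc c * ‖v‖ ^ 2 = ‖v‖ * ‖v‖ * c := by ring
          _ ≤ ‖v‖ * ‖v‖ * (‖v‖⁻¹ * (‖v‖⁻¹ * ⟪M v, v⟫)) := h2'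
          _ = (‖v‖⁻¹ * ‖v‖) * ((‖v‖⁻¹ * ‖v‖) * ⟪M v, v⟫) := by ring
          _ = ⟪M v, v⟫ := by rw [hinv]; ring
      linarith
  -- uniform lower bound on the Rayleigh quotient of P on unit vectors
  have hPnorm_pos : 0 < ‖P‖ := by
    have h1 : (1:ℝ) = ‖u₀‖ := hnu.symm
    have h2 : ‖B (P u₀)‖ = ‖u₀‖ := by rw [hBP]; simp
    have h3 : ‖B (P u₀)‖ ≤ ‖B‖ * ‖P u₀‖ := B.le_opNorm _
    have h4 : ‖P u₀‖ ≤ ‖P‖ * ‖u₀‖ := P.le_opNorm _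
    rw [hnu] at h2 h4
    by_contra hc
    push_neg at hc
    have : ‖P‖ = 0 := le_antisymm hc (norm_nonneg _)
    rw [this, zero_mul] at h4
    have : ‖P u₀‖ = 0 := le_antisymm h4 (norm_nonneg _)
    rw [this, mul_zero] at h3
    linarith
  have hBnorm_pos : 0 < ‖B‖ := by
    have h2 : ‖B (P u₀)‖ = 1 := by rw [hBP]; simpa using hnu
    have h3 : ‖B (P u₀)‖ ≤ ‖B‖ * ‖P u₀‖ := B.le_opNorm _
    by_contra hc
    push_neg at hc
    have : ‖B‖ = 0 := le_antisymm hc (norm_nonneg _)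
    rw [this, zero_mul] at h3
    rw [h2] at h3
    linarith
  set d : ℝ := (‖B‖ ^ 2 * ‖P‖)⁻¹ with hddef
  have hdpos : 0 < d := by positivity
  have hlow : ∀ r ∈ S, c + d ≤ r := by
    rintro r ⟨v, hv, rfl⟩
    rw [Set.mem_setOf_eq] at hv
    have h2 : ‖B (P v)‖ = 1 := by rw [hBP]; simpa using hv
    have h3 : (1:ℝ) ≤ ‖B‖ * ‖P v‖ := by rw [← h2]; exact B.le_opNorm _
    have hPv : ‖B‖⁻¹ ≤ ‖P v‖ := by
      rw [inv_eq_one_div, div_le_iff₀ hBnorm_pos]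
      linarith [mul_comm ‖B‖ ‖P v‖]
    have hCS := genCS hPsa hPpos v
    have h5 : d ≤ ⟪P v, v⟫ := by
      have hPv2 : ‖B‖⁻¹ ^ 2 ≤ ‖P v‖ ^ 2 :=
        pow_le_pow_left₀ (by positivity) hPv 2
      have hPvpos : 0 < ‖P v‖ ^ 2 := by
        have h0 : (0:ℝ) < ‖P v‖ := lt_of_lt_of_le (inv_pos.mpr hBnorm_pos) hPv
        positivity
      have h6 : ‖P v‖ ^ 2 ≤ ‖P‖ * ⟪P v, v⟫ := by
        have h' : ‖P v‖ ^ 2 * ‖P v‖ ^ 2 ≤ ‖P v‖ ^ 2 * (‖P‖ * ⟪P v, v⟫) := by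
          linarith [hCS,
            (by ring : (‖P‖ * ‖P v‖ ^ 2) * ⟪P v, v⟫ = ‖P v‖ ^ 2 * (‖P‖ * ⟪P v, v⟫))]
        exact le_of_mul_le_mul_left h' hPvpos
      have h8 : ‖B‖⁻¹ ^ 2 ≤ ‖P‖ * ⟪P v, v⟫ := le_trans hPv2 h6
      have hB2 : (0:ℝ) < ‖B‖ ^ 2 := by positivity
      have h9 := mul_le_mul_of_nonneg_left h8 hB2.le
      have e1 : ‖B‖ ^ 2 * ‖B‖⁻¹ ^ 2 = 1 := by field_simp
      rw [hddef, inv_eq_one_div, div_le_iff₀ (by positivity)]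
      linarith [h9, e1,
        (by ring : ‖B‖ ^ 2 * (‖P‖ * ⟪P v, v⟫) = ⟪P v, v⟫ * (‖B‖ ^ 2 * ‖P‖))]
    have h7 : ⟪P v, v⟫ = ⟪M v, v⟫ - c := by
      rw [hPapp, inner_sub_left, real_inner_smul_left, real_inner_self_eq_norm_sq, hv]; ring
    rw [h7] at h5
    linarith
  have : c + d ≤ c := le_csInf hSne hlow
  linarith

lemma key (A : X →L[ℝ] Y) (σ : ℝ) (hσpos : 0 < σ)
    (hspec : ∀ μ ∈ spectrum ℝ ((ContinuousLinearMap.adjoint A).comp A), μ = 0 ∨ σ ≤ μ)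
    (u : X) (hu : u ∈ (LinearMap.ker (A : X →ₗ[ℝ] Y) : Submodule ℝ X)ᗮ) :
    σ * ‖u‖ ^ 2 ≤ ‖A u‖ ^ 2 := by
  haveI : IsScalarTower ℝ (X →L[ℝ] X) (X →L[ℝ] X) := IsScalarTower.right
  haveI : SMulCommClass ℝ (X →L[ℝ] X) (X →L[ℝ] X) := Algebra.to_smulCommClass
  set T : X →L[ℝ] X := (ContinuousLinearMap.adjoint A).comp A with hTdef
  have hT : IsSelfAdjoint T := by
    rw [IsSelfAdjoint, hTdef, ContinuousLinearMap.star_eq_adjoint,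
      ContinuousLinearMap.adjoint_comp, ContinuousLinearMap.adjoint_adjoint]
  have hform : ∀ v : X, ⟪T v, v⟫ = ‖A v‖ ^ 2 := by
    intro v
    rw [hTdef, ContinuousLinearMap.comp_apply, ContinuousLinearMap.adjoint_inner_left,
      real_inner_self_eq_norm_sq]
  -- u lies in the closure of the range of T
  have hker : (LinearMap.ker (A : X →ₗ[ℝ] Y) : Submodule ℝ X) = (LinearMap.range (T : X →ₗ[ℝ] X))ᗮ := by
    ext z
    rw [Submodule.mem_orthogonal, LinearMap.mem_ker]
    constructor
    · intro hz w hw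
      obtain ⟨v, rfl⟩ := hw
      change ⟪T v, z⟫ = 0
      rw [symmAux hT v z]
      have : T z = 0 := by
        rw [hTdef, ContinuousLinearMap.comp_apply]
        change ContinuousLinearMap.adjoint A (A z) = 0
        rw [show A z = 0 from hz, map_zero]
      rw [this, inner_zero_right]
    · intro hz
      have h0 : ⟪T z, z⟫ = 0 := hz (T z) (LinearMap.mem_range_self _ z)
      rw [hform] at h0
      have : ‖A z‖ = 0 := by
        have := sq_eq_zero_iff.mp h0.symm.symm
        nlinarith [norm_nonneg (A z), sq_nonneg ‖A z‖]
      exact norm_eq_zero.mp this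
  have huc : u ∈ closure ((LinearMap.range (T : X →ₗ[ℝ] X) : Submodule ℝ X) : Set X) := by
    have hu2 : u ∈ ((LinearMap.range (T : X →ₗ[ℝ] X))ᗮ)ᗮ := by rw [← hker]; exact hu
    rw [Submodule.orthogonal_orthogonal_eq_closure] at hu2
    exact hu2
  refine le_of_forall_pos_le_add fun ε hε => ?_
  set δ : ℝ := ε / (2 * σ * (‖u‖ + 1)) with hδdef
  have hδpos : 0 < δ := by positivity
  obtain ⟨b, hbmem, hbdist⟩ := Metric.mem_closure_iff.mp huc δ hδpos
  obtain ⟨w, rfl⟩ := hbmem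
  rw [dist_eq_norm] at hbdist
  set t : ℝ := max 1 (2 * ‖w‖ / δ) with htdef
  have htpos : (0:ℝ) < t := lt_of_lt_of_le one_pos (le_max_left _ _)
  have ht0 : (t:ℝ) ≠ 0 := ne_of_gt htpos
  have htw : 2 * ‖w‖ / t ≤ δ := by
    have h1 : 2 * ‖w‖ / δ ≤ t := le_max_right _ _
    rw [div_le_iff₀ htpos]
    calc 2 * ‖w‖ = δ * (2 * ‖w‖ / δ) := by field_simp
      _ ≤ δ * t := mul_le_mul_of_nonneg_left h1 hδpos.le
  -- the resolvent F = (1 + t T)⁻¹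
  have hcoerc : ∀ x : X, ⟪(1 + t • T) x, x⟫ = ‖x‖ ^ 2 + t * ‖A x‖ ^ 2 := by
    intro x
    rw [ContinuousLinearMap.add_apply, ContinuousLinearMap.smul_apply,
      ContinuousLinearMap.one_apply, inner_add_left, real_inner_smul_left,
      real_inner_self_eq_norm_sq, hform]
  have hunit : IsUnit (1 + t • T) := by
    refine ContinuousLinearMap.isUnit_of_forall_le_norm_inner_map (1 + t • T)
      (c := (1 : NNReal)) one_pos fun x => ?_
    rw [hcoerc]
    have h1 : (0:ℝ) ≤ ‖x‖ ^ 2 + t * ‖A x‖ ^ 2 := by positivity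
    rw [Real.norm_eq_abs, abs_of_nonneg h1]
    have : (0:ℝ) ≤ t * ‖A x‖ ^ 2 := by positivity
    simp only [NNReal.coe_one, mul_one]
    linarith
  obtain ⟨U, hU⟩ := hunit
  set F : X →L[ℝ] X := ((U⁻¹ : (X →L[ℝ] X)ˣ) : X →L[ℝ] X) with hFdef
  have hFmul : F * (1 + t • T) = 1 := by rw [hFdef, ← hU]; exact U.inv_mul
  have hmulF : (1 + t • T) * F = 1 := by rw [hFdef, ← hU]; exact U.mul_inv
  have hBsa : IsSelfAdjoint (1 + t • T) := by
    rw [IsSelfAdjoint, star_add, star_one, star_smul, star_trivial, hT.star_eq]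
  have hFsa : IsSelfAdjoint F := by
    have hsF : star F * (1 + t • T) = 1 := by
      calc star F * (1 + t • T) = star F * star (1 + t • T) := by rw [hBsa.star_eq]
        _ = star ((1 + t • T) * F) := (star_mul _ _).symm
        _ = star (1 : X →L[ℝ] X) := by rw [hmulF]
        _ = 1 := star_one _
    calc star F = star F * ((1 + t • T) * F) := by rw [hmulF, mul_one]
      _ = (star F * (1 + t • T)) * F := by rw [mul_assoc]
      _ = F := by rw [hsF, one_mul]
  have hFnorm : ∀ v : X, ‖F v‖ ≤ ‖v‖ := by
    intro v
    have hv : (1 + t • T) (F v) = v := by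
      calc (1 + t • T) (F v) = ((1 + t • T) * F) v := (ContinuousLinearMap.mul_apply _ _ _).symm
        _ = v := by rw [hmulF, ContinuousLinearMap.one_apply]
    have hz : ⟪F v, v⟫ = ‖F v‖ ^ 2 + t * ‖A (F v)‖ ^ 2 := by
      have h' := hcoerc (F v)
      rw [hv] at h'
      rw [real_inner_comm]
      exact h'
    have h1 : ‖F v‖ ^ 2 ≤ ⟪F v, v⟫ := by
      rw [hz]
      have : (0:ℝ) ≤ t * ‖A (F v)‖ ^ 2 := by positivity
      linarith
    have h2 : ⟪F v, v⟫ ≤ ‖F v‖ * ‖v‖ := real_inner_le_norm _ _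
    nlinarith [norm_nonneg (F v), norm_nonneg v]
  have hFTw : ‖F (T w)‖ ≤ 2 * ‖w‖ / t := by
    have happ : F w + t • F (T w) = w := by
      have h1 : (F * (1 + t • T)) w = w := by rw [hFmul, ContinuousLinearMap.one_apply]
      rw [ContinuousLinearMap.mul_apply, ContinuousLinearMap.add_apply,
        ContinuousLinearMap.smul_apply, ContinuousLinearMap.one_apply, map_add, map_smul] at h1
      exact h1
    have heq : F (T w) = t⁻¹ • (w - F w) := by
      have h2 : t • F (T w) = w - F w := eq_sub_of_add_eq' happ
      rw [← h2, smul_smul, inv_mul_cancel₀ ht0, one_smul]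
    rw [heq, norm_smul, norm_inv, Real.norm_eq_abs, abs_of_pos htpos]
    have h3 : ‖w - F w‖ ≤ 2 * ‖w‖ := by
      calc ‖w - F w‖ ≤ ‖w‖ + ‖F w‖ := norm_sub_le _ _
        _ ≤ ‖w‖ + ‖w‖ := by linarith [hFnorm w]
        _ = 2 * ‖w‖ := by ring
    rw [div_eq_inv_mul]
    exact mul_le_mul_of_nonneg_left h3 (by positivity)
  have hFu : ‖F u‖ ≤ 2 * δ := by
    calc ‖F u‖ = ‖F (u - T w) + F (T w)‖ := by rw [← map_add, sub_add_cancel]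
      _ ≤ ‖F (u - T w)‖ + ‖F (T w)‖ := norm_add_le _ _
      _ ≤ ‖u - T w‖ + 2 * ‖w‖ / t := add_le_add (hFnorm _) hFTw
      _ ≤ δ + δ := add_le_add hbdist.le htw
      _ = 2 * δ := by ring
  set M : X →L[ℝ] X := T - σ • (1 : X →L[ℝ] X) + σ • F with hMdef
  have hsm1 : IsSelfAdjoint (σ • F) := by
    rw [IsSelfAdjoint, star_smul, star_trivial, hFsa.star_eq]
  have hsm2 : IsSelfAdjoint (σ • (1 : X →L[ℝ] X)) := by
    rw [IsSelfAdjoint, star_smul, star_trivial, star_one]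
  have hMsa : IsSelfAdjoint M := (hT.sub hsm2).add hsm1
  have hMspec : ∀ μ : ℝ, μ < 0 → IsUnit (algebraMap ℝ (X →L[ℝ] X) μ - M) := by
    intro μ hμ
    set B : ℝ := 1 - σ * t - μ * t with hBdef2
    set C : ℝ := -μ with hCdef
    have hCpos : 0 < C := by rw [hCdef]; linarith
    set Q : X →L[ℝ] X := t • (T * T) + B • T + C • (1 : X →L[ℝ] X) with hQdef
    have hfac : M - algebraMap ℝ (X →L[ℝ] X) μ = Q * F := by
      have hcan : (M - algebraMap ℝ (X →L[ℝ] X) μ) * (1 + t • T) = Q := by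
        rw [hMdef, Algebra.algebraMap_eq_smul_one]
        have hσF : (σ • F) * (1 + t • T) = σ • (1 : X →L[ℝ] X) := by
          rw [smul_mul_assoc, hFmul]
        calc (T - σ • (1:X →L[ℝ] X) + σ • F - μ • 1) * (1 + t • T)
            = (T - σ • (1:X →L[ℝ] X) - μ • 1) * (1 + t • T) + (σ • F) * (1 + t • T) := by
              rw [← add_mul]; congr 1; abel
          _ = (T - σ • (1:X →L[ℝ] X) - μ • 1) * (1 + t • T) + σ • (1:X →L[ℝ] X) := by
              rw [hσF]
          _ = Q := by
              rw [hQdef, hBdef2, hCdef]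
              simp only [sub_mul, mul_add, mul_one, one_mul, smul_mul_assoc, mul_smul_comm,
                smul_smul]
              module
      calc M - algebraMap ℝ (X →L[ℝ] X) μ
          = (M - algebraMap ℝ (X →L[ℝ] X) μ) * ((1 + t • T) * F) := by rw [hmulF, mul_one]
        _ = ((M - algebraMap ℝ (X →L[ℝ] X) μ) * (1 + t • T)) * F := by rw [mul_assoc]
        _ = Q * F := by rw [hcan]
    have hroot : ∀ r : ℝ, t * (r * r) + B * r + C = 0 → IsUnit (T - r • (1:X →L[ℝ] X)) := by
      intro r hr0
      have hrs : r ∉ spectrum ℝ T := by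
        intro hmem
        rcases hspec r hmem with h0 | hσle
        · rw [h0] at hr0
          simp only [mul_zero, zero_mul, add_zero, zero_add] at hr0
          linarith
        · have h1 : t * (r * r) + B * r + C = r * (t * (r - σ) + 1) + C * (t * r + 1) := by
            rw [hBdef2, hCdef]; ring
          have hrpos : 0 < r := lt_of_lt_of_le hσpos hσle
          have h2 : 0 < r * (t * (r - σ) + 1) := by
            have h2' : 0 ≤ t * (r - σ) := mul_nonneg htpos.le (by linarith)
            nlinarith
          have h3 : 0 < C * (t * r + 1) := by
            have h3' : 0 < t * r := mul_pos htpos hrpos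
            nlinarith
          rw [h1] at hr0
          linarith
      rw [spectrum.notMem_iff] at hrs
      have hneg : T - r • (1:X →L[ℝ] X) = -(algebraMap ℝ (X →L[ℝ] X) r - T) := by
        rw [Algebra.algebraMap_eq_smul_one]; abel
      rw [hneg]
      exact hrs.neg
    have hQunit : IsUnit Q := by
      set disc : ℝ := B ^ 2 - 4 * t * C with hdiscdef
      rcases lt_or_ge disc 0 with hdisc | hdisc
      · -- negative discriminant : Q is coercive
        set κ : ℝ := (4 * t * C - B ^ 2) / (4 * t) with hκdef
        have h4t : (0:ℝ) < 4 * t := by linarith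
        have hκpos : 0 < κ := by
          rw [hκdef]
          apply div_pos _ h4t
          rw [hdiscdef] at hdisc; linarith
        have hκident : κ * (4 * t) = 4 * t * C - B ^ 2 :=
          div_mul_cancel₀ _ (ne_of_gt h4t)
        have hcoQ : ∀ x : X, κ * ‖x‖ ^ 2 ≤ ⟪Q x, x⟫ := by
          intro x
          have hQx : ⟪Q x, x⟫ = t * ‖T x‖ ^ 2 + B * ⟪T x, x⟫ + C * ‖x‖ ^ 2 := by
            rw [hQdef]
            simp only [ContinuousLinearMap.add_apply, ContinuousLinearMap.smul_apply,
              ContinuousLinearMap.mul_apply, ContinuousLinearMap.one_apply]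
            rw [inner_add_left, inner_add_left, real_inner_smul_left, real_inner_smul_left,
              real_inner_smul_left, symmAux hT (T x) x, real_inner_self_eq_norm_sq,
              real_inner_self_eq_norm_sq]
          have habs : |⟪T x, x⟫| ≤ ‖T x‖ * ‖x‖ := abs_real_inner_le_norm _ _
          have h1 : -(|B| * (‖T x‖ * ‖x‖)) ≤ B * ⟪T x, x⟫ := by
            have h2 : |B * ⟪T x, x⟫| ≤ |B| * (‖T x‖ * ‖x‖) := by
              rw [abs_mul]
              exact mul_le_mul_of_nonneg_left habs (abs_nonneg B)
            linarith [neg_abs_le (B * ⟪T x, x⟫)]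
          have final' : (4 * t * C - B ^ 2) * ‖x‖ ^ 2
              ≤ (t * ‖T x‖ ^ 2 + B * ⟪T x, x⟫ + C * ‖x‖ ^ 2) * (4 * t) := by
            have hprod := mul_le_mul_of_nonneg_left h1 h4t.le
            nlinarith [sq_nonneg (2 * t * ‖T x‖ - |B| * ‖x‖), sq_abs B, hprod]
          rw [hQx]
          have hmul : κ * ‖x‖ ^ 2 * (4 * t)
              ≤ (t * ‖T x‖ ^ 2 + B * ⟪T x, x⟫ + C * ‖x‖ ^ 2) * (4 * t) := by
            calc κ * ‖x‖ ^ 2 * (4 * t) = (κ * (4 * t)) * ‖x‖ ^ 2 := by ring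
              _ = (4 * t * C - B ^ 2) * ‖x‖ ^ 2 := by rw [hκident]
              _ ≤ _ := final'
          exact le_of_mul_le_mul_right hmul h4t
        refine ContinuousLinearMap.isUnit_of_forall_le_norm_inner_map Q
          (c := κ.toNNReal) (by simpa using hκpos) fun x => ?_
        have h0 : 0 ≤ ⟪Q x, x⟫ := le_trans (by positivity) (hcoQ x)
        rw [Real.norm_eq_abs, abs_of_nonneg h0, Real.coe_toNNReal _ hκpos.le]
        calc ‖x‖ ^ 2 * κ = κ * ‖x‖ ^ 2 := by ring
          _ ≤ ⟪Q x, x⟫ := hcoQ x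
      · -- nonnegative discriminant : factor into two linear terms
        set sq : ℝ := Real.sqrt disc with hsqdef
        have hs2 : sq ^ 2 = disc := Real.sq_sqrt hdisc
        set r₁ : ℝ := (-B + sq) / (2 * t) with hr₁def
        set r₂ : ℝ := (-B - sq) / (2 * t) with hr₂def
        have hroot₁ : t * (r₁ * r₁) + B * r₁ + C = 0 := by
          rw [hr₁def]
          field_simp
          nlinarith [hs2, hdiscdef]
        have hroot₂ : t * (r₂ * r₂) + B * r₂ + C = 0 := by
          rw [hr₂def]
          field_simp
          nlinarith [hs2, hdiscdef]
        have e1 : t * (r₁ + r₂) = -B := by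
          rw [hr₁def, hr₂def]; field_simp; ring
        have e2 : t * (r₁ * r₂) = C := by
          rw [hr₁def, hr₂def]
          field_simp
          nlinarith [hs2, hdiscdef]
        have hexp : (T - r₁ • (1:X →L[ℝ] X)) * (T - r₂ • (1:X →L[ℝ] X))
            = T * T - (r₁ + r₂) • T + (r₁ * r₂) • (1:X →L[ℝ] X) := by
          simp only [sub_mul, mul_sub, smul_mul_assoc, mul_smul_comm, mul_one, one_mul,
            smul_smul]
          module
        have hQfac : Q = t • ((T - r₁ • (1:X →L[ℝ] X)) * (T - r₂ • (1:X →L[ℝ] X))) := by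
          rw [hexp, hQdef, smul_add, smul_sub, smul_smul, smul_smul, e1, e2]
          module
        rw [hQfac, Algebra.smul_def]
        exact ((isUnit_iff_ne_zero.mpr ht0).map (algebraMap ℝ (X →L[ℝ] X))).mul
          ((hroot r₁ hroot₁).mul (hroot r₂ hroot₂))
    have hneg2 : algebraMap ℝ (X →L[ℝ] X) μ - M = -(M - algebraMap ℝ (X →L[ℝ] X) μ) := by
      abel
    rw [hneg2, hfac]
    exact (hQunit.mul (Units.isUnit U⁻¹)).neg
  have hMpos := posOfSpec hMsa hMspec u
  have hMu : ⟪M u, u⟫ = ⟪T u, u⟫ - σ * ‖u‖ ^ 2 + σ * ⟪F u, u⟫ := by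
    rw [hMdef]
    simp only [ContinuousLinearMap.add_apply, ContinuousLinearMap.sub_apply,
      ContinuousLinearMap.smul_apply, ContinuousLinearMap.one_apply]
    rw [inner_add_left, inner_sub_left, real_inner_smul_left, real_inner_smul_left,
      real_inner_self_eq_norm_sq]
  have hFuu : ⟪F u, u⟫ ≤ 2 * δ * ‖u‖ := by
    calc ⟪F u, u⟫ ≤ ‖F u‖ * ‖u‖ := real_inner_le_norm _ _
      _ ≤ 2 * δ * ‖u‖ := mul_le_mul_of_nonneg_right hFu (norm_nonneg u)
  have hδε : σ * (2 * δ * ‖u‖) ≤ ε := by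
    have hpos1 : (0:ℝ) < ‖u‖ + 1 := by positivity
    have heq : σ * (2 * δ * ‖u‖) = ε * ‖u‖ / (‖u‖ + 1) := by
      rw [hδdef]; field_simp
    rw [heq, div_le_iff₀ hpos1]
    nlinarith [norm_nonneg u, hε]
  have hσF : σ * ⟪F u, u⟫ ≤ ε :=
    le_trans (mul_le_mul_of_nonneg_left hFuu hσpos.le) hδε
  rw [hMu, hform u] at hMpos
  linarith

/-- If the infimum `σ` of the nonzero spectrum of `A*A` is positive and `y ∈ range A`,
then the least squares functional `f(x) = (1/2)‖Ax - y‖²` is globally `2`-conditioned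
with constant `σ`. -/
theorem stmt6 (A : X →L[ℝ] Y) (y : Y) (hy : y ∈ Set.range A) (σ : ℝ)
    (hσ : σ = sInf (spectrum ℝ ((ContinuousLinearMap.adjoint A).comp A) \ {0}))
    (hσpos : 0 < σ) :
    ∀ x : X,
      σ / 2 * infDist x {z : X | ∀ w, (1:ℝ)/2 * ‖A z - y‖ ^ 2 ≤ (1:ℝ)/2 * ‖A w - y‖ ^ 2} ^ 2
        ≤ (1:ℝ)/2 * ‖A x - y‖ ^ 2 - ⨅ z : X, (1:ℝ)/2 * ‖A z - y‖ ^ 2 := by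
  intro x
  obtain ⟨x₀, hx₀⟩ := hy
  set T : X →L[ℝ] X := (ContinuousLinearMap.adjoint A).comp A with hTdef
  -- spectrum of T is nonnegative
  have hspec0 : ∀ μ ∈ spectrum ℝ T, 0 ≤ μ := by
    intro μ hmem
    by_contra hneg
    push_neg at hneg
    have hunit : IsUnit (algebraMap ℝ (X →L[ℝ] X) μ - T) := by
      refine ContinuousLinearMap.isUnit_of_forall_le_norm_inner_map _
        (c := (-μ).toNNReal) (by simpa using hneg) fun v => ?_
    -- ⟪(μ•1 - T) v, v⟫ = μ‖v‖² - ‖Av‖² ≤ μ‖v‖² < 0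
      have hTv : ⟪T v, v⟫ = ‖A v‖ ^ 2 := by
        rw [hTdef, ContinuousLinearMap.comp_apply, ContinuousLinearMap.adjoint_inner_left,
          real_inner_self_eq_norm_sq]
      have happ : ⟪(algebraMap ℝ (X →L[ℝ] X) μ - T) v, v⟫ = μ * ‖v‖ ^ 2 - ‖A v‖ ^ 2 := by
        rw [Algebra.algebraMap_eq_smul_one, ContinuousLinearMap.sub_apply,
          ContinuousLinearMap.smul_apply, ContinuousLinearMap.one_apply, inner_sub_left,
          real_inner_smul_left, real_inner_self_eq_norm_sq, hTv]
      rw [happ, Real.norm_eq_abs, Real.coe_toNNReal _ (by linarith)]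
      have h1 : μ * ‖v‖ ^ 2 - ‖A v‖ ^ 2 ≤ -( -μ * ‖v‖ ^ 2) := by nlinarith [sq_nonneg ‖A v‖]
      have h2 : -μ * ‖v‖ ^ 2 ≤ -(μ * ‖v‖ ^ 2 - ‖A v‖ ^ 2) := by nlinarith [sq_nonneg ‖A v‖]
      calc ‖v‖ ^ 2 * (-μ) = -μ * ‖v‖ ^ 2 := by ring
        _ ≤ |μ * ‖v‖ ^ 2 - ‖A v‖ ^ 2| := le_abs.mpr (Or.inr h2)
    exact (spectrum.notMem_iff.mpr hunit) hmem
  have hspec : ∀ μ ∈ spectrum ℝ T, μ = 0 ∨ σ ≤ μ := by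
    intro μ hmem
    rcases eq_or_ne μ 0 with h0 | h0
    · exact Or.inl h0
    · refine Or.inr ?_
      rw [hσ]
      apply csInf_le
      · exact ⟨0, fun r hr => hspec0 r hr.1⟩
      · exact ⟨hmem, h0⟩
  -- the infimum of the objective is 0
  have hf0 : ∀ z : X, (0:ℝ) ≤ (1:ℝ)/2 * ‖A z - y‖ ^ 2 := fun z => by positivity
  have hinf : (⨅ z : X, (1:ℝ)/2 * ‖A z - y‖ ^ 2) = 0 := by
    apply le_antisymm
    · have : (1:ℝ)/2 * ‖A x₀ - y‖ ^ 2 = 0 := by rw [hx₀]; simp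
      calc (⨅ z : X, (1:ℝ)/2 * ‖A z - y‖ ^ 2) ≤ (1:ℝ)/2 * ‖A x₀ - y‖ ^ 2 :=
            ciInf_le ⟨0, fun r ⟨z, hz⟩ => hz ▸ hf0 z⟩ x₀
        _ = 0 := this
    · exact le_ciInf hf0
  -- the argmin set is the solution set
  have hSset : {z : X | ∀ w, (1:ℝ)/2 * ‖A z - y‖ ^ 2 ≤ (1:ℝ)/2 * ‖A w - y‖ ^ 2}
      = {z : X | A z = y} := by
    ext z
    simp only [Set.mem_setOf_eq]
    constructor
    · intro hz
      have := hz x₀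
      rw [hx₀] at this
      simp only [sub_self, norm_zero] at this
      have h1 : ‖A z - y‖ ^ 2 ≤ 0 := by nlinarith
      have h2 : ‖A z - y‖ = 0 := by nlinarith [norm_nonneg (A z - y), sq_nonneg ‖A z - y‖]
      rw [← sub_eq_zero]
      exact norm_eq_zero.mp h2
    · intro hz w
      calc (1:ℝ)/2 * ‖A z - y‖ ^ 2 = 0 := by rw [hz]; simp
        _ ≤ (1:ℝ)/2 * ‖A w - y‖ ^ 2 := hf0 w
  rw [hSset, hinf, sub_zero]
  -- orthogonal decomposition
  set N : Submodule ℝ X := LinearMap.ker (A : X →ₗ[ℝ] Y) with hNdef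
  haveI : CompleteSpace N := (ContinuousLinearMap.isClosed_ker A).completeSpace_coe
  set v : X := x - x₀ with hvdef
  set n : X := (N.orthogonalProjectionOnto v : X) with hndef
  set u : X := v - n with hudef
  have hu : u ∈ Nᗮ := N.sub_starProjection_mem_orthogonal v
  have hnker : A n = 0 := by
    have h : n ∈ LinearMap.ker (A : X →ₗ[ℝ] Y) := (N.orthogonalProjectionOnto v).2
    exact LinearMap.mem_ker.mp h
  have hmem : x₀ + n ∈ {z : X | A z = y} := by
    simp only [Set.mem_setOf_eq, map_add, hnker, add_zero, hx₀]
  have hdist : infDist x {z : X | A z = y} ≤ ‖u‖ := by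
    calc infDist x {z : X | A z = y} ≤ dist x (x₀ + n) := infDist_le_dist_of_mem hmem
      _ = ‖u‖ := by rw [dist_eq_norm, hudef, hvdef]; congr 1; abel
  have hAu : A u = A x - y := by
    rw [hudef, map_sub, hnker, sub_zero, hvdef, map_sub, hx₀]
  have hkey := key A σ hσpos hspec u hu
  rw [hAu] at hkey
  have hd2 : infDist x {z : X | A z = y} ^ 2 ≤ ‖u‖ ^ 2 :=
    pow_le_pow_left₀ (infDist_nonneg) hdist 2
  nlinarith [hσpos, hd2, hkey]
end

section
/- Let C, D be closed convex subsets of a Hilbert space X with C ∩ D ≠ ∅ and 0 ∈ sri(C - D). Then the function f(x) = max{dist(x, C), dist(x, D)} is 1-conditioned on every bounded set: for each bounded Ω ⊂ X there exists γ > 0 such that γ·dist(x, C ∩ D) ≤ max{dist(x, C), dist(x, D)} for all x ∈ Ω. -/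
set_option maxHeartbeats 1000000

open Set Metric Pointwise

section auxiliary
variable {X : Type*} [NormedAddCommGroup X] [NormedSpace ℝ X] [CompleteSpace X]

theorem baire_absorb {X : Type*} [NormedAddCommGroup X] [NormedSpace ℝ X] [CompleteSpace X]
    (V : Submodule ℝ X) (hVc : IsClosed (V : Set X)) (S : Set X)
    (hSV : S ⊆ (V : Set X)) (hconv : Convex ℝ S)
    (habs : ∀ v ∈ V, ∃ n : ℕ, v ∈ ((n : ℝ) + 1) • S) :
    ∃ δ > 0, ∀ v ∈ V, ‖v‖ < δ → v ∈ closure S := by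
  haveI : CompleteSpace V := hVc.completeSpace_coe
  haveI : BaireSpace V := inferInstance
  set T : Set V := (Subtype.val : V → X) ⁻¹' S with hT
  have hTconv : Convex ℝ T := hconv.linear_preimage V.subtype
  have hmemT : ∀ (w : V) (n : ℕ), (w : X) ∈ ((n:ℝ)+1) • S → w ∈ ((n:ℝ)+1) • T := by
    intro w n hw
    obtain ⟨s, hs, hsw⟩ := hw
    refine ⟨⟨s, hSV hs⟩, hs, ?_⟩
    ext
    simpa using hsw
  have hcover : (⋃ n : ℕ, closure (((n:ℝ)+1) • T)) = univ := by
    refine eq_univ_of_forall fun w => ?_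
    obtain ⟨n, hn⟩ := habs w w.2
    exact mem_iUnion.2 ⟨n, subset_closure (hmemT w n hn)⟩
  obtain ⟨n, w₁, hw₁⟩ := nonempty_interior_of_iUnion_of_closed
    (fun n : ℕ => isClosed_closure (s := ((n:ℝ)+1) • T)) hcover
  have hne1 : ((n:ℝ)+1) ≠ 0 := by positivity
  rw [closure_smul₀ _ _, interior_smul₀ hne1 _] at hw₁
  obtain ⟨w₀, hw₀, -⟩ := hw₁
  -- symmetrize
  obtain ⟨m, hm⟩ := habs (-(w₀ : X)) (neg_mem w₀.2)
  have hm1 : ((m:ℝ)+1) ≠ 0 := by positivity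
  have hy : (-(((m:ℝ)+1)⁻¹) • w₀ : V) ∈ T := by
    obtain ⟨y, hy, hyw⟩ := hmemT (-w₀) m (by simpa using hm)
    have hxy : -(((m:ℝ)+1)⁻¹) • w₀ = y := by
      have := congrArg (fun z => ((((m:ℝ)+1)⁻¹ : ℝ)) • z) hyw
      simpa [smul_smul, inv_mul_cancel₀ hm1, neg_smul] using this.symm
    rwa [hxy]
  have hzero : (0 : V) ∈ interior (closure T) := by
    have hconvK : Convex ℝ (closure T) := hTconv.closure
    set c : ℝ := ((m:ℝ)+1)⁻¹ with hc
    have hcpos : 0 < c := by positivity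
    have hyc : ((-c) • w₀ : V) ∈ closure (closure T) := by
      rw [closure_closure]; exact subset_closure hy
    have hcomb := hconvK.combo_interior_closure_mem_interior hw₀
      hyc (a := c/(1+c)) (b := 1/(1+c))
      (by positivity) (by positivity) (by field_simp; ring)
    have hz : (c/(1+c)) • w₀ + (1/(1+c)) • ((-c) • w₀) = (0 : V) := by
      rw [smul_smul, ← add_smul]
      convert zero_smul ℝ w₀ using 2
      field_simp; ring
    rwa [hz] at hcomb
  obtain ⟨δ, hδpos, hball⟩ := Metric.mem_nhds_iff.1 (mem_interior_iff_mem_nhds.1 hzero)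
  refine ⟨δ, hδpos, fun v hv hvn => ?_⟩
  have hw : (⟨v, hv⟩ : V) ∈ closure T := hball (by
    simp only [Metric.mem_ball, dist_eq_norm, sub_zero]
    simpa using hvn)
  exact map_mem_closure continuous_subtype_val hw (fun a ha => ha)


theorem step_lemma {X : Type*} [NormedAddCommGroup X] [NormedSpace ℝ X]
    (C D : Set X) (hCcv : Convex ℝ C) (hDcv : Convex ℝ D) (e : X)
    (V : Submodule ℝ X)
    (hCD : ∀ c ∈ C, ∀ d ∈ D, c - d ∈ V)
    (δ : ℝ) (hδ : 0 < δ)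
    (P : ∀ v ∈ V, ‖v‖ < δ → v ∈ closure ((C ∩ closedBall e 1) - (D ∩ closedBall e 1)))
    {c d : X} (hc : c ∈ C) (hd : d ∈ D) {η : ℝ} (hη : 0 < η) :
    ∃ c₁ ∈ C, ∃ d₁ ∈ D, ‖c₁ - d₁‖ ≤ η ∧ ‖c₁ - c‖ ≤ 2 * ‖d - c‖ / δ * (1 + ‖c - e‖) := by
  by_cases hv : d - c = 0
  · refine ⟨c, hc, d, hd, ?_, ?_⟩
    · rw [show c - d = -(d - c) from (neg_sub d c).symm, hv]
      simpa using hη.le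
    · have : (0:ℝ) ≤ 2 * ‖d - c‖ / δ * (1 + ‖c - e‖) := by positivity
      simpa using this
  · have hvn : 0 < ‖d - c‖ := norm_pos_iff.2 hv
    set σ : ℝ := δ / (2 * ‖d - c‖) with hσ
    have hσpos : 0 < σ := by positivity
    have hvV : d - c ∈ V := by
      have := V.neg_mem (hCD c hc d hd)
      simpa using this
    have hnorm : ‖σ • (d - c)‖ < δ := by
      rw [norm_smul, Real.norm_eq_abs, abs_of_pos hσpos, hσ]
      rw [div_mul_eq_mul_div, mul_comm]
      rw [div_lt_iff₀ (by positivity)]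
      nlinarith [hvn, hδ]
    have hcl := P (σ • (d - c)) (V.smul_mem σ hvV) hnorm
    rw [Metric.mem_closure_iff] at hcl
    obtain ⟨u, huS, hud⟩ := hcl η hη
    obtain ⟨c', hc', d', hd', hu⟩ := Set.mem_sub.1 huS
    set lam : ℝ := σ / (1 + σ) with hlamdef
    have h1σ : (0:ℝ) < 1 + σ := by linarith
    have hlam0 : 0 ≤ lam := by positivity
    have hlam1 : lam ≤ 1 := by
      rw [hlamdef, div_le_one h1σ]; linarith
    have h1lam : 1 - lam = 1 / (1 + σ) := by
      rw [hlamdef]; field_simp; ring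
    have hlamσ : lam = (1 - lam) * σ := by
      rw [h1lam, hlamdef]; field_simp
    refine ⟨lam • c + (1 - lam) • c', hCcv hc hc'.1 hlam0 (by linarith) (by ring),
            lam • d + (1 - lam) • d', hDcv hd hd'.1 hlam0 (by linarith) (by ring), ?_, ?_⟩
    · have hkey : (lam • c + (1 - lam) • c') - (lam • d + (1 - lam) • d')
          = (1 - lam) • (u - σ • (d - c)) := by
        rw [smul_sub, smul_smul, ← hlamσ, ← hu]
        module
      rw [hkey, norm_smul, Real.norm_eq_abs, abs_of_nonneg (by linarith : (0:ℝ) ≤ 1 - lam)]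
      have hd2 : ‖u - σ • (d - c)‖ ≤ η := by
        rw [← dist_eq_norm, dist_comm]
        exact hud.le
      calc (1 - lam) * ‖u - σ • (d - c)‖ ≤ 1 * η := by
            apply mul_le_mul (by linarith) hd2 (norm_nonneg _) (by norm_num)
        _ = η := one_mul η
    · have hkey : (lam • c + (1 - lam) • c') - c = (1 - lam) • (c' - c) := by
        have h : lam = 1 - (1 - lam) := by ring
        module
      rw [hkey, norm_smul, Real.norm_eq_abs, abs_of_nonneg (by linarith : (0:ℝ) ≤ 1 - lam)]
      have hc'c : ‖c' - c‖ ≤ 1 + ‖c - e‖ := by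
        calc ‖c' - c‖ = ‖(c' - e) + (e - c)‖ := by rw [sub_add_sub_cancel]
          _ ≤ ‖c' - e‖ + ‖e - c‖ := norm_add_le _ _
          _ ≤ 1 + ‖c - e‖ := by
              have h1 : ‖c' - e‖ ≤ 1 := by
                have := hc'.2
                rwa [Metric.mem_closedBall, dist_eq_norm] at this
              rw [norm_sub_rev e c]
              linarith
      have h1lamle : 1 - lam ≤ 2 * ‖d - c‖ / δ := by
        rw [h1lam]
        have h1 : 1 / (1 + σ) ≤ 1 / σ := by
          apply one_div_le_one_div_of_le hσpos; linarith
        have h2 : 1 / σ = 2 * ‖d - c‖ / δ := by rw [hσ, one_div_div]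
        linarith
      calc (1 - lam) * ‖c' - c‖ ≤ (2 * ‖d - c‖ / δ) * (1 + ‖c - e‖) := by
            apply mul_le_mul h1lamle hc'c (norm_nonneg _) (by positivity)
        _ = 2 * ‖d - c‖ / δ * (1 + ‖c - e‖) := rfl

theorem stmt7_main (C D : Set X) (hCcl : IsClosed C) (hCcv : Convex ℝ C)
    (hDcl : IsClosed D) (hDcv : Convex ℝ D) (e : X) (heC : e ∈ C) (heD : e ∈ D)
    (V : Submodule ℝ X)
    (hCD : ∀ c ∈ C, ∀ d ∈ D, c - d ∈ V)
    (δ : ℝ) (hδ : 0 < δ)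
    (P : ∀ v ∈ V, ‖v‖ < δ → v ∈ closure ((C ∩ closedBall e 1) - (D ∩ closedBall e 1)))
    (step : ∀ c ∈ C, ∀ d ∈ D, ∀ η : ℝ, 0 < η →
      ∃ c₁ ∈ C, ∃ d₁ ∈ D, ‖c₁ - d₁‖ ≤ η ∧ ‖c₁ - c‖ ≤ 2 * ‖d - c‖ / δ * (1 + ‖c - e‖))
    (Ω : Set X) (hΩ : Bornology.IsBounded Ω) :
    ∃ γ > 0, ∀ x ∈ Ω, γ * infDist x (C ∩ D) ≤ max (infDist x C) (infDist x D) := by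
  classical
  obtain ⟨r, hr⟩ := hΩ.subset_closedBall e
  set M : ℝ := max r 0 + 1 with hM
  have hM1 : (1:ℝ) ≤ M := by rw [hM]; have := le_max_right r (0:ℝ); linarith
  have hMpos : (0:ℝ) < M := by linarith
  have hxeM : ∀ x ∈ Ω, dist x e ≤ M := by
    intro x hx
    have := hr hx
    rw [Metric.mem_closedBall] at this
    have : r ≤ max r 0 := le_max_left _ _
    linarith [Metric.mem_closedBall.1 (hr hx)]
  set B₀ : ℝ := 2 * M + 1 with hB₀
  set β₀ : ℝ := 2 * (1 + B₀) / δ with hβ₀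
  have hβ₀pos : 0 < β₀ := by rw [hβ₀]; positivity
  set A : ℝ := (M + 1) * (1 + 2 * β₀) with hA
  set B : ℝ := A + M + 1 with hB
  have hBpos : 0 < B := by rw [hB, hA]; positivity
  set β : ℝ := 2 * (1 + B) / δ with hβ
  have hβpos : 0 < β := by rw [hβ]; positivity
  -- choice function for the iteration
  have hF : ∀ p : X × X, ∀ η : ℝ, ∃ q : X × X,
      (p.1 ∈ C → p.2 ∈ D → 0 < η → q.1 ∈ C ∧ q.2 ∈ D ∧ ‖q.1 - q.2‖ ≤ η ∧
        ‖q.1 - p.1‖ ≤ 2 * ‖p.2 - p.1‖ / δ * (1 + ‖p.1 - e‖)) := by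
    intro p η
    by_cases h : p.1 ∈ C ∧ p.2 ∈ D ∧ 0 < η
    · obtain ⟨c₁', hcm, d₁', hdm, h1, h2⟩ := step p.1 h.1 p.2 h.2.1 η h.2.2
      exact ⟨(c₁', d₁'), fun _ _ _ => ⟨hcm, hdm, h1, h2⟩⟩
    · refine ⟨p, fun h1 h2 h3 => absurd ⟨h1, h2, h3⟩ h⟩
  choose F hFspec using hF
  -- the key estimate
  have key : ∀ x ∈ Ω, infDist x (C ∩ D) ≤ (1 + 2 * β₀) * max (infDist x C) (infDist x D) := by
    intro x hx
    set ε : ℝ := max (infDist x C) (infDist x D) with hε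
    have hεnn : 0 ≤ ε := le_trans infDist_nonneg (le_max_left _ _)
    have hεM : ε ≤ M := by
      apply max_le
      · exact le_trans (infDist_le_dist_of_mem heC) (hxeM x hx)
      · exact le_trans (infDist_le_dist_of_mem heD) (hxeM x hx)
    -- it suffices to prove the bound with an arbitrarily small additive error
    have main : ∀ η₀ : ℝ, 0 < η₀ → η₀ ≤ 1 →
        infDist x (C ∩ D) ≤ (1 + 2 * β₀) * ε + ((1 + 2 * β₀) + 2 * β) * η₀ := by
      intro η₀ hη₀ hη₀1
      obtain ⟨c₀, hc₀, hxc₀⟩ := (Metric.infDist_lt_iff ⟨e, heC⟩).1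
        (lt_of_le_of_lt (le_max_left _ _) (by linarith : ε < ε + η₀))
      obtain ⟨d₀, hd₀, hxd₀⟩ := (Metric.infDist_lt_iff ⟨e, heD⟩).1
        (lt_of_le_of_lt (le_max_right _ _) (by linarith : ε < ε + η₀))
      have hgap0 : ‖d₀ - c₀‖ ≤ 2 * (ε + η₀) := by
        rw [← dist_eq_norm]
        calc dist d₀ c₀ ≤ dist d₀ x + dist x c₀ := dist_triangle _ _ _
          _ ≤ (ε + η₀) + (ε + η₀) := by
              rw [dist_comm d₀ x]; exact add_le_add hxd₀.le hxc₀.le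
          _ = 2 * (ε + η₀) := by ring
      set θ : ℝ := min η₀ (1 / (2 * β)) with hθ
      have hθpos : 0 < θ := lt_min hη₀ (by positivity)
      have hθη : θ ≤ η₀ := min_le_left _ _
      have hθβ : 2 * β * θ ≤ 1 := by
        have : θ ≤ 1 / (2 * β) := min_le_right _ _
        rw [le_div_iff₀ (by positivity)] at this
        linarith [this]
      -- first step
      obtain ⟨c₁, hc₁, d₁, hd₁, hgap1, hmove1⟩ := step c₀ hc₀ d₀ hd₀ θ hθpos
      have hc₀e : ‖c₀ - e‖ ≤ B₀ := by
        rw [← dist_eq_norm]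
        calc dist c₀ e ≤ dist c₀ x + dist x e := dist_triangle _ _ _
          _ ≤ (ε + η₀) + M := by rw [dist_comm c₀ x]; exact add_le_add hxc₀.le (hxeM x hx)
          _ ≤ B₀ := by rw [hB₀]; linarith
      have hmove1' : ‖c₁ - c₀‖ ≤ 2 * β₀ * (ε + η₀) := by
        calc ‖c₁ - c₀‖ ≤ 2 * ‖d₀ - c₀‖ / δ * (1 + ‖c₀ - e‖) := hmove1
          _ ≤ 2 * (2 * (ε + η₀)) / δ * (1 + B₀) := by gcongr
          _ = 2 * β₀ * (ε + η₀) := by rw [hβ₀]; ring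
      have hdx1 : dist x c₁ ≤ A := by
        calc dist x c₁ ≤ dist x c₀ + dist c₀ c₁ := dist_triangle _ _ _
          _ ≤ (ε + η₀) + 2 * β₀ * (ε + η₀) := by
              rw [dist_comm c₀ c₁, dist_eq_norm c₁ c₀]
              exact add_le_add hxc₀.le hmove1'
          _ = (ε + η₀) * (1 + 2 * β₀) := by ring
          _ ≤ (M + 1) * (1 + 2 * β₀) := by
              apply mul_le_mul_of_nonneg_right (by linarith) (by positivity)
          _ = A := by rw [hA]
      -- the iterated sequence
      obtain ⟨seq, hseq0, hseqS⟩ : ∃ f : ℕ → X × X, f 0 = (c₁, d₁) ∧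
          ∀ k, f (k+1) = F (f k) (θ * (2:ℝ)⁻¹^(k+1)) :=
        ⟨fun k => Nat.rec (c₁, d₁) (fun k p => F p (θ * (2:ℝ)⁻¹^(k+1))) k, rfl, fun k => rfl⟩
      have hpow01 : ∀ k : ℕ, 0 < (2:ℝ)⁻¹^k := fun k => by positivity
      have hpowle1 : ∀ k : ℕ, (2:ℝ)⁻¹^k ≤ 1 := fun k =>
        pow_le_one₀ (by norm_num) (by norm_num)
      have hInv : ∀ k, (seq k).1 ∈ C ∧ (seq k).2 ∈ D ∧
          ‖(seq k).1 - (seq k).2‖ ≤ θ * (2:ℝ)⁻¹^k ∧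
          dist x (seq k).1 ≤ dist x c₁ + 2 * β * θ * (1 - (2:ℝ)⁻¹^k) := by
        intro k
        induction k with
        | zero =>
          rw [hseq0]
          exact ⟨hc₁, hd₁, by simpa using hgap1, by simp⟩
        | succ k ih =>
          obtain ⟨h1, h2, h3, h4⟩ := ih
          have hηk : 0 < θ * (2:ℝ)⁻¹^(k+1) := by positivity
          have h := hFspec (seq k) (θ * (2:ℝ)⁻¹^(k+1)) h1 h2 hηk
          rw [← hseqS k] at h
          obtain ⟨g1, g2, g3, g4⟩ := h
          have hce : ‖(seq k).1 - e‖ ≤ B := by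
            rw [← dist_eq_norm]
            calc dist (seq k).1 e ≤ dist (seq k).1 x + dist x e := dist_triangle _ _ _
              _ ≤ (dist x c₁ + 2 * β * θ * 1) + M := by
                  rw [dist_comm]
                  refine add_le_add (le_trans h4 ?_) (hxeM x hx)
                  have : 2 * β * θ * (1 - (2:ℝ)⁻¹^k) ≤ 2 * β * θ * 1 := by
                    apply mul_le_mul_of_nonneg_left (by linarith [hpow01 k]) (by positivity)
                  linarith
              _ ≤ B := by rw [hB]; linarith [hdx1, hθβ]
          have hmv : ‖(seq (k+1)).1 - (seq k).1‖ ≤ β * θ * (2:ℝ)⁻¹^k := by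
            calc ‖(seq (k+1)).1 - (seq k).1‖
                ≤ 2 * ‖(seq k).2 - (seq k).1‖ / δ * (1 + ‖(seq k).1 - e‖) := g4
              _ ≤ 2 * (θ * (2:ℝ)⁻¹^k) / δ * (1 + B) := by
                  rw [norm_sub_rev]
                  gcongr
              _ = β * θ * (2:ℝ)⁻¹^k := by rw [hβ]; ring
          refine ⟨g1, g2, g3, ?_⟩
          calc dist x (seq (k+1)).1 ≤ dist x (seq k).1 + dist (seq k).1 (seq (k+1)).1 :=
                dist_triangle _ _ _
            _ ≤ (dist x c₁ + 2 * β * θ * (1 - (2:ℝ)⁻¹^k)) + β * θ * (2:ℝ)⁻¹^k := by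
                rw [dist_comm ((seq k).1) ((seq (k+1)).1), dist_eq_norm ((seq (k+1)).1) ((seq k).1)]
                exact add_le_add h4 hmv
            _ = dist x c₁ + 2 * β * θ * (1 - (2:ℝ)⁻¹^(k+1)) := by
                rw [pow_succ]; ring
      have hmove : ∀ k, dist ((seq k).1) ((seq (k+1)).1) ≤ (β * θ) * (2:ℝ)⁻¹^k := by
        intro k
        obtain ⟨h1, h2, h3, h4⟩ := hInv k
        have hηk : 0 < θ * (2:ℝ)⁻¹^(k+1) := by positivity
        have h := hFspec (seq k) (θ * (2:ℝ)⁻¹^(k+1)) h1 h2 hηk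
        rw [← hseqS k] at h
        have hce : ‖(seq k).1 - e‖ ≤ B := by
          rw [← dist_eq_norm]
          calc dist (seq k).1 e ≤ dist (seq k).1 x + dist x e := dist_triangle _ _ _
            _ ≤ (dist x c₁ + 2 * β * θ * 1) + M := by
                rw [dist_comm]
                refine add_le_add (le_trans h4 ?_) (hxeM x hx)
                have : 2 * β * θ * (1 - (2:ℝ)⁻¹^k) ≤ 2 * β * θ * 1 := by
                  apply mul_le_mul_of_nonneg_left (by linarith [hpow01 k]) (by positivity)
                linarith
            _ ≤ B := by rw [hB]; linarith [hdx1, hθβ]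
        rw [dist_comm ((seq k).1) ((seq (k+1)).1), dist_eq_norm ((seq (k+1)).1) ((seq k).1)]
        calc ‖(seq (k+1)).1 - (seq k).1‖
            ≤ 2 * ‖(seq k).2 - (seq k).1‖ / δ * (1 + ‖(seq k).1 - e‖) := h.2.2.2
          _ ≤ 2 * (θ * (2:ℝ)⁻¹^k) / δ * (1 + B) := by
              rw [norm_sub_rev]
              gcongr
          _ = (β * θ) * (2:ℝ)⁻¹^k := by rw [hβ]; ring
      have hcauchy : CauchySeq (fun k => (seq k).1) :=
        cauchySeq_of_le_geometric (2:ℝ)⁻¹ (β * θ) (by norm_num) hmove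
      obtain ⟨z, hz⟩ := cauchySeq_tendsto_of_complete hcauchy
      have hzC : z ∈ C :=
        hCcl.mem_of_tendsto hz (Filter.Eventually.of_forall fun k => (hInv k).1)
      have hgapz : Filter.Tendsto (fun k => dist ((seq k).1) ((seq k).2))
          Filter.atTop (nhds 0) := by
        have hg : Filter.Tendsto (fun k : ℕ => θ * (2:ℝ)⁻¹^k) Filter.atTop (nhds 0) := by
          have h2 := tendsto_pow_atTop_nhds_zero_of_lt_one
            (by norm_num : (0:ℝ) ≤ 2⁻¹) (by norm_num : (2:ℝ)⁻¹ < 1)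
          simpa using h2.const_mul θ
        exact squeeze_zero (fun k => dist_nonneg)
          (fun k => by rw [dist_eq_norm]; exact (hInv k).2.2.1) hg
      have hz2 : Filter.Tendsto (fun k => (seq k).2) Filter.atTop (nhds z) :=
        hz.congr_dist hgapz
      have hzD : z ∈ D :=
        hDcl.mem_of_tendsto hz2 (Filter.Eventually.of_forall fun k => (hInv k).2.1)
      have hdistz : dist x z ≤ dist x c₁ + 2 * β * θ := by
        refine le_of_tendsto (Filter.Tendsto.dist tendsto_const_nhds hz)
          (Filter.Eventually.of_forall fun k => ?_)
        have h4 := (hInv k).2.2.2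
        have : 2 * β * θ * (1 - (2:ℝ)⁻¹^k) ≤ 2 * β * θ * 1 := by
          apply mul_le_mul_of_nonneg_left (by linarith [hpow01 k]) (by positivity)
        linarith
      calc infDist x (C ∩ D) ≤ dist x z := infDist_le_dist_of_mem ⟨hzC, hzD⟩
        _ ≤ dist x c₁ + 2 * β * θ := hdistz
        _ ≤ (ε + η₀) * (1 + 2 * β₀) + 2 * β * η₀ := by
            have : dist x c₁ ≤ (ε + η₀) * (1 + 2 * β₀) := by
              calc dist x c₁ ≤ dist x c₀ + dist c₀ c₁ := dist_triangle _ _ _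
                _ ≤ (ε + η₀) + 2 * β₀ * (ε + η₀) := by
                    rw [dist_comm c₀ c₁, dist_eq_norm c₁ c₀]
                    exact add_le_add hxc₀.le hmove1'
                _ = (ε + η₀) * (1 + 2 * β₀) := by ring
            have h2 : 2 * β * θ ≤ 2 * β * η₀ := by
              apply mul_le_mul_of_nonneg_left hθη (by positivity)
            linarith
        _ = (1 + 2 * β₀) * ε + ((1 + 2 * β₀) + 2 * β) * η₀ := by ring
    -- now let η₀ → 0
    refine le_of_forall_pos_le_add fun ε' hε' => ?_
    set K : ℝ := (1 + 2 * β₀) + 2 * β with hK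
    have hKpos : 0 < K := by rw [hK]; positivity
    have hη₀ : 0 < min 1 (ε' / K) := lt_min one_pos (by positivity)
    calc infDist x (C ∩ D) ≤ (1 + 2 * β₀) * ε + K * min 1 (ε' / K) :=
          main _ hη₀ (min_le_left _ _)
      _ ≤ (1 + 2 * β₀) * ε + K * (ε' / K) := by
          apply add_le_add_right
          apply mul_le_mul_of_nonneg_left (min_le_right _ _) hKpos.le
      _ ≤ (1 + 2 * β₀) * ε + ε' := by
          rw [mul_div_cancel₀ _ hKpos.ne']
  refine ⟨(1 + 2 * β₀)⁻¹, by positivity, fun x hx => ?_⟩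
  rw [inv_mul_le_iff₀ (by positivity)]
  exact key x hx

end auxiliary

open Set Metric

variable {X : Type*} [NormedAddCommGroup X] [InnerProductSpace ℝ X] [CompleteSpace X]

/-- The strong relative interior of a set `S`: points `x ∈ S` such that the cone
generated by `S - x` is a closed linear subspace. -/
def sriSet (S : Set X) : Set X :=
  {x ∈ S | ∃ V : Submodule ℝ X, IsClosed (V : Set X) ∧
    (V : Set X) = {y | ∃ t : ℝ, 0 < t ∧ ∃ s ∈ S, y = t • (s - x)}}

/-- If `C, D` are closed convex sets with `C ∩ D ≠ ∅` and `0 ∈ sri(C - D)`, then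
`f(x) = max{dist(x,C), dist(x,D)}` is `1`-conditioned on every bounded set. -/
theorem stmt7 (C D : Set X) (hCcl : IsClosed C) (hCcv : Convex ℝ C)
    (hDcl : IsClosed D) (hDcv : Convex ℝ D) (hne : (C ∩ D).Nonempty)
    (hsri : (0 : X) ∈ sriSet {y | ∃ c ∈ C, ∃ d ∈ D, y = c - d})
    (Ω : Set X) (hΩ : Bornology.IsBounded Ω) :
    ∃ γ > 0, ∀ x ∈ Ω, γ * infDist x (C ∩ D) ≤ max (infDist x C) (infDist x D) := by
  obtain ⟨e, heC, heD⟩ := hne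
  obtain ⟨-, V, hVc, hVeq⟩ := hsri
  have hmemV : ∀ c ∈ C, ∀ d ∈ D, c - d ∈ V := by
    intro c hc d hd
    show c - d ∈ (V : Set X)
    rw [hVeq]
    exact ⟨1, one_pos, c - d, ⟨c, hc, d, hd, rfl⟩, by simp⟩
  set S' : Set X := (C ∩ closedBall e 1) - (D ∩ closedBall e 1) with hS'
  have hS'V : S' ⊆ (V : Set X) := by
    intro y hy
    obtain ⟨c, hc, d, hd, rfl⟩ := Set.mem_sub.1 hy
    exact hmemV c hc.1 d hd.1
  have hS'conv : Convex ℝ S' :=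
    (hCcv.inter (convex_closedBall e 1)).sub (hDcv.inter (convex_closedBall e 1))
  have habs : ∀ v ∈ V, ∃ n : ℕ, v ∈ ((n : ℝ) + 1) • S' := by
    intro v hv
    have hv' : v ∈ (V : Set X) := hv
    rw [hVeq] at hv'
    obtain ⟨t, ht, s, hs, rfl⟩ := hv'
    obtain ⟨c, hc, d, hd, rfl⟩ := hs
    obtain ⟨N, hN⟩ := exists_nat_ge (t * (1 + ‖c - e‖ + ‖d - e‖))
    have hN1 : (0:ℝ) < (N:ℝ) + 1 := by positivity
    set μ : ℝ := t / ((N:ℝ) + 1) with hμ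
    have hμpos : 0 < μ := by positivity
    have hbig : t * (1 + ‖c - e‖ + ‖d - e‖) ≤ (N:ℝ) + 1 := by linarith
    have hti : t ≤ (N:ℝ) + 1 := by nlinarith [norm_nonneg (c - e), norm_nonneg (d - e)]
    have hμ1 : μ ≤ 1 := by rw [hμ, div_le_one hN1]; exact hti
    have hμc : μ * ‖c - e‖ ≤ 1 := by
      rw [hμ, div_mul_eq_mul_div, div_le_one hN1]
      nlinarith [norm_nonneg (c - e), norm_nonneg (d - e)]
    have hμd : μ * ‖d - e‖ ≤ 1 := by
      rw [hμ, div_mul_eq_mul_div, div_le_one hN1]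
      nlinarith [norm_nonneg (c - e), norm_nonneg (d - e)]
    refine ⟨N, μ • (c - d), ?_, ?_⟩
    · refine Set.mem_sub.2 ⟨μ • c + (1 - μ) • e, ⟨hCcv hc heC hμpos.le (by linarith) (by ring), ?_⟩,
        μ • d + (1 - μ) • e, ⟨hDcv hd heD hμpos.le (by linarith) (by ring), ?_⟩, by module⟩
      · rw [Metric.mem_closedBall, dist_eq_norm,
          show μ • c + (1 - μ) • e - e = μ • (c - e) by module, norm_smul,
          Real.norm_eq_abs, abs_of_pos hμpos]
        exact hμc
      · rw [Metric.mem_closedBall, dist_eq_norm,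
          show μ • d + (1 - μ) • e - e = μ • (d - e) by module, norm_smul,
          Real.norm_eq_abs, abs_of_pos hμpos]
        exact hμd
    · show ((N:ℝ)+1) • (μ • (c - d)) = t • (c - d - 0)
      rw [smul_smul, hμ, mul_div_cancel₀ _ hN1.ne', sub_zero]
  obtain ⟨δ, hδpos, P⟩ := baire_absorb V hVc S' hS'V hS'conv habs
  exact stmt7_main C D hCcl hCcv hDcl hDcv e heC heD V hmemV δ hδpos P
    (fun c hc d hd η hη => step_lemma C D hCcv hDcv e V hmemV δ hδpos P hc hd hη) Ω hΩ
end

section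
/- Let g ∈ Γ₀(X), h : X → ℝ convex differentiable with L-Lipschitz gradient, f = g + h, λ > 0, and T_λ x := prox_{λg}(x - λ∇h(x)). Then for all x, u ∈ X: ‖T_λ x - u‖² - ‖x - u‖² ≤ (λL - 1)·‖T_λ x - x‖² + 2λ·(f(u) - f(T_λ x)). -/
open Set

variable {X : Type*} [NormedAddCommGroup X] [InnerProductSpace ℝ X] [CompleteSpace X]

open RealInnerProductSpace Filter Topology

private lemma line_hasDerivAt (h : X → ℝ) (h' : X → X)
    (hgrad : ∀ x, HasGradientAt h (h' x) x) (x d : X) (t : ℝ) :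
    HasDerivAt (fun s : ℝ => h (x + s • d)) ⟪h' (x + t • d), d⟫ t := by
  have hc : HasDerivAt (fun s : ℝ => x + s • d) d t := by
    simpa using ((hasDerivAt_id t).smul_const d).const_add x
  have hf := (hgrad (x + t • d)).hasFDerivAt
  have := hf.comp_hasDerivAt t hc
  simpa [InnerProductSpace.toDual_apply_apply, Function.comp_def] using this

/-- Convexity gradient inequality. -/
private lemma grad_convex_ineq (h : X → ℝ) (hconv : ConvexOn ℝ univ h)
    (h' : X → X) (hgrad : ∀ x, HasGradientAt h (h' x) x) (x u : X) :
    ⟪h' x, u - x⟫ ≤ h u - h x := by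
  set φ : ℝ → ℝ := fun s => h (x + s • (u - x)) with hφ
  have hder : HasDerivAt φ ⟪h' x, u - x⟫ 0 := by
    simpa using line_hasDerivAt h h' hgrad x (u - x) 0
  have hslope : Tendsto (slope φ 0) (𝓝[>] (0:ℝ)) (𝓝 ⟪h' x, u - x⟫) :=
    (hasDerivAt_iff_tendsto_slope.mp hder).mono_left
      (nhdsWithin_mono _ (fun t ht => ne_of_gt ht))
  refine le_of_tendsto hslope ?_
  filter_upwards [Ioc_mem_nhdsGT_of_mem (Set.left_mem_Ico.mpr one_pos)] with t ht
  have ht0 : 0 < t := ht.1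
  have hc := hconv.2 (mem_univ x) (mem_univ u) (by linarith [ht.2] : (0:ℝ) ≤ 1 - t)
    (le_of_lt ht0) (by ring)
  have hxt : x + t • (u - x) = (1 - t) • x + t • u := by
    rw [smul_sub, sub_smul, one_smul]; abel
  have hφt : φ t ≤ (1 - t) * h x + t * h u := by
    rw [hφ]; simpa [hxt] using hc
  have hφ0 : φ 0 = h x := by simp [hφ]
  rw [slope_def_field]
  simp only [sub_zero]
  rw [div_le_iff₀ ht0]
  simp only [hφ0]
  nlinarith

/-- Descent lemma. -/
private lemma descent_lemma (h : X → ℝ) (h' : X → X)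
    (hgrad : ∀ x, HasGradientAt h (h' x) x) (L : ℝ)
    (hlip : ∀ x y, ‖h' x - h' y‖ ≤ L * ‖x - y‖) (x y : X) :
    h y ≤ h x + ⟪h' x, y - x⟫ + L / 2 * ‖y - x‖ ^ 2 := by
  set d := y - x with hd
  set ψ : ℝ → ℝ := fun t => h (x + t • d) - t * ⟪h' x, d⟫ - L / 2 * t ^ 2 * ‖d‖ ^ 2 with hψ
  have hder : ∀ t : ℝ, HasDerivAt ψ
      (⟪h' (x + t • d), d⟫ - ⟪h' x, d⟫ - L * t * ‖d‖ ^ 2) t := by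
    intro t
    have h1 := line_hasDerivAt h h' hgrad x d t
    have h2 : HasDerivAt (fun s : ℝ => s * ⟪h' x, d⟫) ⟪h' x, d⟫ t := by
      simpa using (hasDerivAt_id t).mul_const ⟪h' x, d⟫
    have h3 : HasDerivAt (fun s : ℝ => L / 2 * s ^ 2 * ‖d‖ ^ 2)
        (L * t * ‖d‖ ^ 2) t := by
      have := ((hasDerivAt_pow 2 t).const_mul (L / 2)).mul_const (‖d‖ ^ 2)
      exact this.congr_deriv (by ring)
    exact (h1.sub h2).sub h3
  have hmono : AntitoneOn ψ (Icc (0:ℝ) 1) := by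
    apply antitoneOn_of_deriv_nonpos (convex_Icc 0 1)
    · exact (fun t _ => ((hder t).differentiableAt).continuousAt.continuousWithinAt)
    · exact fun t _ => ((hder t).differentiableAt).differentiableWithinAt
    · intro t ht
      rw [interior_Icc] at ht
      rw [(hder t).deriv]
      have hb : ⟪h' (x + t • d) - h' x, d⟫ ≤ ‖h' (x + t • d) - h' x‖ * ‖d‖ :=
        real_inner_le_norm _ _
      have hl : ‖h' (x + t • d) - h' x‖ ≤ L * (t * ‖d‖) := by
        have := hlip (x + t • d) x
        simpa [norm_smul, abs_of_pos ht.1, mul_assoc] using this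
      have hd0 : (0:ℝ) ≤ ‖d‖ := norm_nonneg _
      have : ⟪h' (x + t • d), d⟫ - ⟪h' x, d⟫ ≤ L * t * ‖d‖ ^ 2 := by
        rw [← inner_sub_left]
        calc ⟪h' (x + t • d) - h' x, d⟫ ≤ ‖h' (x + t • d) - h' x‖ * ‖d‖ := hb
          _ ≤ L * (t * ‖d‖) * ‖d‖ := by
              apply mul_le_mul_of_nonneg_right hl hd0
          _ = L * t * ‖d‖ ^ 2 := by ring
      linarith
  have := hmono (Set.left_mem_Icc.mpr zero_le_one) (Set.right_mem_Icc.mpr zero_le_one)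
    zero_le_one
  simp only [hψ] at this
  simp only [one_smul, zero_smul, add_zero, one_pow, one_mul, zero_mul, zero_pow,
    mul_zero, sub_zero] at this
  have hxy : x + d = y := by rw [hd]; abel
  rw [hxy] at this
  linarith

/-- Fundamental descent estimate for the forward-backward map (Lemma A.2 i)):
if `T = prox_{λg}(x - λ∇h(x))` and `f = g + h`, then
`‖T - u‖² - ‖x - u‖² ≤ (λL - 1)‖T - x‖² + 2λ(f(u) - f(T))`. -/
theorem stmt12 (g h : X → ℝ) (hg : ConvexOn ℝ univ g)
    (hglsc : LowerSemicontinuous g) (hconv : ConvexOn ℝ univ h)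
    (h' : X → X) (hgrad : ∀ x, HasGradientAt h (h' x) x)
    (L lam : ℝ) (hL : 0 < L)
    (hlip : ∀ x y, ‖h' x - h' y‖ ≤ L * ‖x - y‖) (hlam : 0 < lam)
    (x u T : X)
    (hT : ∀ w, g T + 1 / (2 * lam) * ‖T - (x - lam • h' x)‖ ^ 2
      ≤ g w + 1 / (2 * lam) * ‖w - (x - lam • h' x)‖ ^ 2) :
    ‖T - u‖ ^ 2 - ‖x - u‖ ^ 2
      ≤ (lam * L - 1) * ‖T - x‖ ^ 2 + 2 * lam * ((g u + h u) - (g T + h T)) := by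
  set z : X := x - lam • h' x with hz
  set E : ℝ := (g u - g T) + (1/lam) * ⟪T - z, u - T⟫ with hE
  set D : ℝ := (1/(2*lam)) * ‖u - T‖ ^ 2 with hD
  -- Step 1: subgradient inequality for g at T
  have hEnn : 0 ≤ E := by
    have key : ∀ t : ℝ, t ∈ Ioc (0:ℝ) 1 → 0 ≤ E + t * D := by
      intro t ht
      have ht0 : 0 < t := ht.1
      have hw := hT (T + t • (u - T))
      have hcvx := hg.2 (mem_univ T) (mem_univ u) (by linarith [ht.2] : (0:ℝ) ≤ 1 - t)
        (le_of_lt ht0) (by ring)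
      have hTt : T + t • (u - T) = (1 - t) • T + t • u := by
        rw [smul_sub, sub_smul, one_smul]; abel
      have hgle : g (T + t • (u - T)) ≤ (1 - t) * g T + t * g u := by
        rw [hTt]; exact hcvx
      have hexp : ‖T + t • (u - T) - z‖ ^ 2
          = ‖T - z‖ ^ 2 + 2 * t * ⟪T - z, u - T⟫ + t ^ 2 * ‖u - T‖ ^ 2 := by
        have harr : T + t • (u - T) - z = (T - z) + t • (u - T) := by abel
        rw [harr, norm_add_sq_real, real_inner_smul_right, norm_smul]
        simp [abs_of_pos ht0]
        ring
      rw [hexp] at hw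
      have h2 : 0 ≤ t * (E + t * D) := by
        have heq : t * (E + t * D)
            = t * (g u - g T) + 1/(2*lam) * (2 * t * ⟪T - z, u - T⟫
              + t ^ 2 * ‖u - T‖ ^ 2) := by
          rw [hE, hD]; field_simp; ring
        rw [heq]
        nlinarith [hw, hgle]
      have := le_of_mul_le_mul_left (by linarith : t * 0 ≤ t * (E + t * D)) ht0
      linarith
    have htend : Tendsto (fun t : ℝ => E + t * D) (𝓝[>] (0:ℝ)) (𝓝 E) := by
      have : Tendsto (fun t : ℝ => E + t * D) (𝓝 (0:ℝ)) (𝓝 (E + 0 * D)) := by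
        exact (continuous_const.add (continuous_id.mul continuous_const)).tendsto 0
      simpa using this.mono_left nhdsWithin_le_nhds
    refine ge_of_tendsto htend ?_
    filter_upwards [Ioc_mem_nhdsGT_of_mem (Set.left_mem_Ico.mpr one_pos)] with t ht
    exact key t ht
  have hsub : ⟪z - T, u - T⟫ ≤ lam * (g u - g T) := by
    have h1 : ⟪z - T, u - T⟫ = - ⟪T - z, u - T⟫ := by
      rw [← neg_sub T z, inner_neg_left]
    rw [hE] at hEnn
    have h2 : 0 ≤ lam * ((g u - g T) + (1/lam) * ⟪T - z, u - T⟫) :=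
      mul_nonneg (le_of_lt hlam) hEnn
    rw [h1]
    have : lam * ((1/lam) * ⟪T - z, u - T⟫) = ⟪T - z, u - T⟫ := by
      field_simp
    nlinarith [h2]
  -- Step 2: convexity of h
  have hcv : ⟪h' x, u - x⟫ ≤ h u - h x := grad_convex_ineq h hconv h' hgrad x u
  -- Step 3: descent lemma
  have hdes : h T ≤ h x + ⟪h' x, T - x⟫ + L / 2 * ‖T - x‖ ^ 2 :=
    descent_lemma h h' hgrad L hlip x T
  -- Step 4: expand inner products
  have hzexp : ⟪z - T, u - T⟫ = ⟪x - T, u - T⟫ - lam * ⟪h' x, u - T⟫ := by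
    rw [hz]
    have : x - lam • h' x - T = (x - T) - lam • h' x := by abel
    rw [this, inner_sub_left, real_inner_smul_left]
  have hinn : ⟪h' x, u - T⟫ = ⟪h' x, u - x⟫ - ⟪h' x, T - x⟫ := by
    rw [← inner_sub_right]
    congr 1
    abel
  have hpar : ‖x - u‖ ^ 2 = ‖x - T‖ ^ 2 - 2 * ⟪x - T, u - T⟫ + ‖u - T‖ ^ 2 := by
    have : x - u = (x - T) - (u - T) := by abel
    rw [this, norm_sub_sq_real]
  have hn1 : ‖T - u‖ = ‖u - T‖ := norm_sub_rev _ _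
  have hn2 : ‖T - x‖ = ‖x - T‖ := norm_sub_rev _ _
  rw [hn1, hn2, hpar]
  have hlip2 : lam * (h u - h T) ≥ lam * ⟪h' x, u - T⟫ - lam * (L/2) * ‖x - T‖ ^ 2 := by
    rw [hinn]
    have : h u - h T ≥ ⟪h' x, u - x⟫ - ⟪h' x, T - x⟫ - L/2 * ‖x - T‖^2 := by
      rw [← hn2]; linarith
    nlinarith [this, hlam.le]
  rw [hzexp] at hsub
  nlinarith [hsub, hlip2]
end

section
/- Let g ∈ Γ₀(X), h : X → ℝ convex differentiable with L-Lipschitz gradient, f = g + h, 0 < λ ≤ 2/L, and T_λ x := prox_{λg}(x - λ∇h(x)). Then for all x ∈ X: ‖∂f(T_λ x)‖₋ ≤ λ^{-1}·‖T_λ x - x‖ ≤ ‖∂f(x)‖₋. -/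
open Set
open scoped ENNReal

variable {X : Type*} [NormedAddCommGroup X] [InnerProductSpace ℝ X] [CompleteSpace X]

/-- ε-argument: if `a ≤ b + c*t` for all small positive `t`, then `a ≤ b`. -/
lemma aux_le_of_Ioc {a b c : ℝ} (h : ∀ t ∈ Set.Ioc (0:ℝ) 1, a ≤ b + c * t) : a ≤ b := by
  refine le_of_forall_pos_le_add fun ε hε => ?_
  have hpos : 0 < ε / (|c| + 1) := by positivity
  set t := min 1 (ε / (|c| + 1)) with ht
  have ht1 : t ∈ Set.Ioc (0:ℝ) 1 := ⟨lt_min one_pos hpos, min_le_left _ _⟩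
  have hct : c * t ≤ ε := by
    calc c * t ≤ |c| * t := by
          apply mul_le_mul_of_nonneg_right (le_abs_self c) ht1.1.le
      _ ≤ |c| * (ε / (|c| + 1)) := by
          apply mul_le_mul_of_nonneg_left (min_le_right _ _) (abs_nonneg c)
      _ ≤ ε := by
          rw [div_eq_inv_mul, ← mul_assoc]
          have h1 : |c| * (|c| + 1)⁻¹ ≤ 1 := by
            rw [mul_inv_le_iff₀ (by positivity), one_mul]; linarith [abs_nonneg c]
          nlinarith
  linarith [h t ht1]

/-- Descent lemma. -/
lemma aux_descent (h : X → ℝ) (h' : X → X) (hgrad : ∀ x, HasGradientAt h (h' x) x)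
    (L : ℝ) (hL : 0 < L) (hlip : ∀ x y, ‖h' x - h' y‖ ≤ L * ‖x - y‖) (x y : X) :
    h y ≤ h x + (inner ℝ (h' x) (y - x) : ℝ) + L / 2 * ‖y - x‖ ^ 2 := by
  set d := y - x with hd
  have hcont : Continuous h' := by
    refine (LipschitzWith.of_dist_le_mul (K := ⟨L, hL.le⟩) fun a b => ?_).continuous
    rw [dist_eq_norm, dist_eq_norm]; exact hlip a b
  have hline : ∀ t : ℝ, HasDerivAt (fun t : ℝ => x + t • d) d t := fun t => by
    simpa using ((hasDerivAt_id t).smul_const d).const_add x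
  have hφ : ∀ t : ℝ, HasDerivAt (fun t => h (x + t • d)) (inner ℝ (h' (x + t • d)) d : ℝ) t := by
    intro t
    have := (hgrad (x + t • d)).hasFDerivAt.comp_hasDerivAt t (hline t)
    simpa [InnerProductSpace.toDual_apply_apply, Function.comp_def] using this
  have ψcont : Continuous fun t : ℝ => (inner ℝ (h' (x + t • d)) d : ℝ) :=
    (hcont.comp (continuous_const.add (continuous_id.smul continuous_const))).inner
      continuous_const
  have key : h (x + (1:ℝ) • d) - h (x + (0:ℝ) • d)
      = ∫ t in (0:ℝ)..1, (inner ℝ (h' (x + t • d)) d : ℝ) :=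
    (intervalIntegral.integral_eq_sub_of_hasDerivAt (fun t _ => hφ t)
      (ψcont.intervalIntegrable 0 1)).symm
  have hbound : (∫ t in (0:ℝ)..1, (inner ℝ (h' (x + t • d)) d : ℝ))
      ≤ ∫ t in (0:ℝ)..1, ((inner ℝ (h' x) d : ℝ) + L * ‖d‖ ^ 2 * t) := by
    apply intervalIntegral.integral_mono_on zero_le_one (ψcont.intervalIntegrable 0 1)
      ((by continuity : Continuous fun t : ℝ => (inner ℝ (h' x) d : ℝ) + L * ‖d‖ ^ 2 * t).intervalIntegrable 0 1)
    intro t ht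
    have h1 : (inner ℝ (h' (x + t • d)) d : ℝ) - inner ℝ (h' x) d
        = inner ℝ (h' (x + t • d) - h' x) d := (inner_sub_left _ _ _).symm
    have h2 : ‖h' (x + t • d) - h' x‖ ≤ L * (t * ‖d‖) := by
      have := hlip (x + t • d) x
      simpa [norm_smul, abs_of_nonneg ht.1] using this
    have h3 := real_inner_le_norm (h' (x + t • d) - h' x) d
    nlinarith [norm_nonneg d, ht.1, norm_nonneg (h' (x + t • d) - h' x)]
  have hrhs : (∫ t in (0:ℝ)..1, ((inner ℝ (h' x) d : ℝ) + L * ‖d‖ ^ 2 * t))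
      = (inner ℝ (h' x) d : ℝ) + L / 2 * ‖d‖ ^ 2 := by
    rw [intervalIntegral.integral_add (intervalIntegrable_const)
      ((by continuity : Continuous fun t : ℝ => L * ‖d‖ ^ 2 * t).intervalIntegrable 0 1),
      intervalIntegral.integral_const, intervalIntegral.integral_const_mul,
      integral_id]
    simp only [smul_eq_mul]
    ring
  have e1 : x + (1:ℝ) • d = y := by simp [hd]
  have e0 : x + (0:ℝ) • d = x := by simp
  rw [e1, e0] at key
  linarith [hbound.trans_eq hrhs, key]

/-- Gradient inequality for convex differentiable functions. -/
lemma aux_grad_ineq (h : X → ℝ) (hconv : ConvexOn ℝ univ h) (h' : X → X)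
    (hgrad : ∀ x, HasGradientAt h (h' x) x)
    (L : ℝ) (hL : 0 < L) (hlip : ∀ x y, ‖h' x - h' y‖ ≤ L * ‖x - y‖) (x y : X) :
    h x + (inner ℝ (h' x) (y - x) : ℝ) ≤ h y := by
  set d := y - x with hd
  have key : ∀ t ∈ Set.Ioc (0:ℝ) 1,
      h x + (inner ℝ (h' x) d : ℝ) ≤ h y + (3 * L / 2 * ‖d‖ ^ 2) * t := by
    intro t ht
    have hxt : (1 - t) • x + t • y = x + t • d := by
      rw [hd, smul_sub, sub_smul, one_smul]; abel
    have hc := hconv.2 (mem_univ x) (mem_univ y)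
      (by linarith [ht.2] : (0:ℝ) ≤ 1 - t) ht.1.le (by ring)
    rw [hxt] at hc
    have hdesc := aux_descent h h' hgrad L hL hlip (x + t • d) x
    have e1 : x - (x + t • d) = -(t • d) := by abel
    rw [e1, inner_neg_right, real_inner_smul_right, norm_neg, norm_smul,
      Real.norm_eq_abs, abs_of_nonneg ht.1.le] at hdesc
    simp only [smul_eq_mul] at hc
    have h2 : (inner ℝ (h' x) d : ℝ) ≤ (inner ℝ (h' (x + t • d)) d : ℝ) + L * t * ‖d‖ ^ 2 := by
      have h3 := real_inner_le_norm (h' x - h' (x + t • d)) d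
      have h4 : ‖h' x - h' (x + t • d)‖ ≤ L * (t * ‖d‖) := by
        have h5 := hlip x (x + t • d)
        have e2 : x - (x + t • d) = -(t • d) := by abel
        rw [e2, norm_neg, norm_smul, Real.norm_eq_abs, abs_of_nonneg ht.1.le] at h5
        exact h5
      rw [inner_sub_left] at h3
      nlinarith [norm_nonneg d, ht.1.le]
    have hmain : t * (h x + (inner ℝ (h' x) d : ℝ))
        ≤ t * (h y + (3 * L / 2 * ‖d‖ ^ 2) * t) := by
      nlinarith [mul_le_mul_of_nonneg_left h2 ht.1.le, ht.1.le, norm_nonneg d]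
    exact le_of_mul_le_mul_left hmain ht.1
  exact aux_le_of_Ioc key

/-- Quadratic lower bound (half of Baillon–Haddad). -/
lemma aux_lower (h : X → ℝ) (hconv : ConvexOn ℝ univ h) (h' : X → X)
    (hgrad : ∀ x, HasGradientAt h (h' x) x)
    (L : ℝ) (hL : 0 < L) (hlip : ∀ x y, ‖h' x - h' y‖ ≤ L * ‖x - y‖) (x y : X) :
    h x + (inner ℝ (h' x) (y - x) : ℝ) + 1/(2*L) * ‖h' y - h' x‖ ^ 2 ≤ h y := by
  set w := h' y - h' x with hw
  set z := y - (1/L) • w with hz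
  have d1 := aux_descent h h' hgrad L hL hlip y z
  have d2 := aux_grad_ineq h hconv h' hgrad L hL hlip x z
  have ez : z - y = -((1/L) • w) := by rw [hz]; abel
  rw [ez, inner_neg_right, real_inner_smul_right, norm_neg, norm_smul,
    Real.norm_eq_abs, abs_of_pos (by positivity : (0:ℝ) < 1/L)] at d1
  have ezx : z - x = (y - x) - (1/L) • w := by rw [hz]; abel
  rw [ezx, inner_sub_right, real_inner_smul_right] at d2
  have hwi : (inner ℝ (h' y) w : ℝ) - (inner ℝ (h' x) w : ℝ) = ‖w‖ ^ 2 := by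
    rw [← inner_sub_left, ← hw, real_inner_self_eq_norm_sq]
  have hsq : L / 2 * (1/L * ‖w‖) ^ 2 = 1/(2*L) * ‖w‖ ^ 2 := by
    field_simp
  rw [hsq] at d1
  have h6 : 1/L * ((inner ℝ (h' y) w : ℝ) - (inner ℝ (h' x) w : ℝ)) = 1/L * ‖w‖ ^ 2 := by
    rw [hwi]
  have h7 : 1/L * ‖w‖ ^ 2 - 1/(2*L) * ‖w‖ ^ 2 = 1/(2*L) * ‖w‖ ^ 2 := by
    field_simp; ring
  linarith [d1, d2, h6, h7]

/-- Cocoercivity (Baillon–Haddad). -/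
lemma aux_coco (h : X → ℝ) (hconv : ConvexOn ℝ univ h) (h' : X → X)
    (hgrad : ∀ x, HasGradientAt h (h' x) x)
    (L : ℝ) (hL : 0 < L) (hlip : ∀ x y, ‖h' x - h' y‖ ≤ L * ‖x - y‖) (x y : X) :
    1/L * ‖h' x - h' y‖ ^ 2 ≤ (inner ℝ (h' x - h' y) (x - y) : ℝ) := by
  have l1 := aux_lower h hconv h' hgrad L hL hlip x y
  have l2 := aux_lower h hconv h' hgrad L hL hlip y x
  rw [norm_sub_rev] at l1
  have e2 : (inner ℝ (h' x - h' y) (x - y) : ℝ)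
      = (inner ℝ (h' x) (x - y) : ℝ) - (inner ℝ (h' y) (x - y) : ℝ) := inner_sub_left _ _ _
  have e1 : (inner ℝ (h' x) (x - y) : ℝ) = - (inner ℝ (h' x) (y - x) : ℝ) := by
    rw [← inner_neg_right, neg_sub]
  rw [e2, e1]
  have hL2 : 0 < 2 * L := by positivity
  have : 1/(2*L) * ‖h' x - h' y‖ ^ 2 + 1/(2*L) * ‖h' x - h' y‖ ^ 2
      = 1/L * ‖h' x - h' y‖ ^ 2 := by field_simp; ring
  linarith


set_option maxHeartbeats 1000000 in
/-- Subgradient estimate for the forward-backward map (Lemma A.2 ii)):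
if `T = prox_{λg}(x - λ∇h(x))` and `f = g + h` with `0 < λ ≤ 2/L`, then
`‖∂f(T)‖₋ ≤ λ⁻¹‖T - x‖ ≤ ‖∂f(x)‖₋`. -/
theorem stmt13 (g h : X → ℝ) (hg : ConvexOn ℝ univ g)
    (hglsc : LowerSemicontinuous g) (hconv : ConvexOn ℝ univ h)
    (h' : X → X) (hgrad : ∀ x, HasGradientAt h (h' x) x)
    (L lam : ℝ) (hL : 0 < L)
    (hlip : ∀ x y, ‖h' x - h' y‖ ≤ L * ‖x - y‖)
    (hlam : 0 < lam) (hlam2 : lam ≤ 2 / L)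
    (x T : X)
    (hT : ∀ w, g T + 1 / (2 * lam) * ‖T - (x - lam • h' x)‖ ^ 2
      ≤ g w + 1 / (2 * lam) * ‖w - (x - lam • h' x)‖ ^ 2) :
    dnorm (fun z => g z + h z) T ≤ ENNReal.ofReal (lam⁻¹ * ‖T - x‖) ∧
    ENNReal.ofReal (lam⁻¹ * ‖T - x‖) ≤ dnorm (fun z => g z + h z) x := by
  set y' := x - lam • h' x with hy'
  clear_value y'
  have hlaminv : L / 2 ≤ lam⁻¹ := by
    have h1 : (2 / L)⁻¹ ≤ lam⁻¹ := by
      apply inv_anti₀ hlam hlam2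
    rwa [inv_div] at h1
  have hc0 : (0:ℝ) < 1 / (2 * lam) := by positivity
  -- the prox subgradient
  have hs : lam⁻¹ • (y' - T) ∈ fsubdiff g T := by
    intro w
    apply aux_le_of_Ioc (c := 1 / (2 * lam) * ‖w - T‖ ^ 2)
    intro t ht
    have hT' := hT (T + t • (w - T))
    have hcv : g (T + t • (w - T)) ≤ (1 - t) * g T + t * g w := by
      have h1 := hg.2 (mem_univ T) (mem_univ w)
        (by linarith [ht.2] : (0:ℝ) ≤ 1 - t) ht.1.le (by ring)
      have e : (1 - t) • T + t • w = T + t • (w - T) := by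
        rw [smul_sub, sub_smul, one_smul]; abel
      rw [e] at h1
      simpa using h1
    have hnorm : ‖T + t • (w - T) - y'‖ ^ 2
        = ‖T - y'‖ ^ 2 + 2 * t * (inner ℝ (T - y') (w - T) : ℝ) + t ^ 2 * ‖w - T‖ ^ 2 := by
      have e : T + t • (w - T) - y' = (T - y') + t • (w - T) := by abel
      rw [e, norm_add_sq_real, real_inner_smul_right, norm_smul, Real.norm_eq_abs,
        abs_of_nonneg ht.1.le]
      ring
    rw [hnorm] at hT'
    have hinner : (inner ℝ (lam⁻¹ • (y' - T)) (w - T) : ℝ)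
        = -(2 * (1 / (2 * lam))) * (inner ℝ (T - y') (w - T) : ℝ) := by
      rw [real_inner_smul_left, ← neg_sub T y', inner_neg_left]
      have e : lam⁻¹ = 2 * (1 / (2 * lam)) := by field_simp
      rw [e]; ring
    rw [hinner]
    have hmain : t * (g T + -(2 * (1 / (2 * lam))) * (inner ℝ (T - y') (w - T) : ℝ))
        ≤ t * (g w + 1 / (2 * lam) * ‖w - T‖ ^ 2 * t) := by
      nlinarith [hT', hcv, ht.1.le]
    exact le_of_mul_le_mul_left hmain ht.1
  -- the subgradient of f at T
  set v := lam⁻¹ • (y' - T) + h' T with hvdef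
  have hv : v ∈ fsubdiff (fun z => g z + h z) T := by
    intro u
    have h1 := hs u
    have h2 := aux_grad_ineq h hconv h' hgrad L hL hlip T u
    simp only [hvdef, inner_add_left]
    linarith
  have hvnorm : ‖v‖ ≤ lam⁻¹ * ‖T - x‖ := by
    have hv2 : v = lam⁻¹ • (x - T) - (h' x - h' T) := by
      have e0 : y' - T = (x - T) - lam • h' x := by rw [hy']; abel
      have e1 : lam⁻¹ • (lam • h' x) = h' x := by
        rw [smul_smul, inv_mul_cancel₀ hlam.ne', one_smul]
      rw [hvdef, e0, smul_sub, e1]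
      abel
    have hco := aux_coco h hconv h' hgrad L hL hlip x T
    have expand : ‖v‖ ^ 2 = lam⁻¹ ^ 2 * ‖x - T‖ ^ 2
        - 2 * lam⁻¹ * (inner ℝ (x - T) (h' x - h' T) : ℝ) + ‖h' x - h' T‖ ^ 2 := by
      rw [hv2, norm_sub_sq_real, real_inner_smul_left, norm_smul, Real.norm_eq_abs,
        abs_of_pos (inv_pos.2 hlam)]
      ring
    have hcomm : (inner ℝ (x - T) (h' x - h' T) : ℝ) = (inner ℝ (h' x - h' T) (x - T) : ℝ) :=
      real_inner_comm _ _
    have hsq : ‖v‖ ^ 2 ≤ (lam⁻¹ * ‖x - T‖) ^ 2 := by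
      have hfac : 1 ≤ 2 * lam⁻¹ * (1 / L) := by
        have ha := mul_le_mul_of_nonneg_left hlaminv
          (by positivity : (0:ℝ) ≤ 2 * (1 / L))
        have hb : 2 * (1 / L) * (L / 2) = 1 := by field_simp
        nlinarith [ha, hb]
      have h8 : ‖h' x - h' T‖ ^ 2 ≤ 2 * lam⁻¹ * (inner ℝ (h' x - h' T) (x - T) : ℝ) := by
        have h9 := mul_le_mul_of_nonneg_left hco
          (by positivity : (0:ℝ) ≤ 2 * lam⁻¹)
        nlinarith [hfac, sq_nonneg ‖h' x - h' T‖]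
      rw [hcomm] at expand
      nlinarith [expand, h8]
    have h0 : (0:ℝ) ≤ lam⁻¹ * ‖x - T‖ := by positivity
    rw [norm_sub_rev T x]
    nlinarith [norm_nonneg v, hsq, h0]
  constructor
  · calc dnorm (fun z => g z + h z) T ≤ (‖v‖₊ : ℝ≥0∞) := by
          exact iInf₂_le v hv
      _ ≤ ENNReal.ofReal (lam⁻¹ * ‖T - x‖) := by
          rw [← ENNReal.ofReal_coe_nnreal, coe_nnnorm]
          exact ENNReal.ofReal_le_ofReal hvnorm
  · apply le_iInf₂
    intro w hw
    rw [← ENNReal.ofReal_coe_nnreal, coe_nnnorm]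
    apply ENNReal.ofReal_le_ofReal
    -- real inequality: lam⁻¹ * ‖T - x‖ ≤ ‖w‖
    have hw' : w - h' x ∈ fsubdiff g x := by
      intro z
      apply aux_le_of_Ioc (c := L / 2 * ‖z - x‖ ^ 2)
      intro t ht
      have h1 := hw (x + t • (z - x))
      dsimp only at h1
      have h2 := aux_descent h h' hgrad L hL hlip x (x + t • (z - x))
      have h3 : g (x + t • (z - x)) ≤ (1 - t) * g x + t * g z := by
        have h4 := hg.2 (mem_univ x) (mem_univ z)
          (by linarith [ht.2] : (0:ℝ) ≤ 1 - t) ht.1.le (by ring)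
        have e : (1 - t) • x + t • z = x + t • (z - x) := by
          rw [smul_sub, sub_smul, one_smul]; abel
        rw [e] at h4
        simpa using h4
      have e : x + t • (z - x) - x = t • (z - x) := by abel
      rw [e, real_inner_smul_right] at h1
      rw [e, real_inner_smul_right, norm_smul, Real.norm_eq_abs,
        abs_of_nonneg ht.1.le] at h2
      rw [inner_sub_left]
      have hmain : t * (g x + ((inner ℝ w (z - x) : ℝ) - (inner ℝ (h' x) (z - x) : ℝ)))
          ≤ t * (g z + L / 2 * ‖z - x‖ ^ 2 * t) := by
        nlinarith [h1, h2, h3, ht.1.le]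
      exact le_of_mul_le_mul_left hmain ht.1
    have m1 := hs x
    have m2 := hw' T
    have key : lam⁻¹ * ‖x - T‖ ^ 2 ≤ (inner ℝ w (x - T) : ℝ) := by
      have e0 : y' - T = (x - T) - lam • h' x := by rw [hy']; abel
      rw [e0, smul_sub, smul_smul, inv_mul_cancel₀ hlam.ne', one_smul, inner_sub_left,
        real_inner_smul_left, real_inner_self_eq_norm_sq] at m1
      have e1 : T - x = -(x - T) := by abel
      rw [e1, inner_neg_right, inner_sub_left] at m2
      linarith
    rcases eq_or_ne T x with rfl | hne
    · simp
    · have hn : 0 < ‖x - T‖ := by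
        rw [norm_sub_pos_iff]; exact fun hxx => hne hxx.symm
      have h5 := real_inner_le_norm w (x - T)
      rw [norm_sub_rev T x]
      have h6 : lam⁻¹ * ‖x - T‖ * ‖x - T‖ ≤ ‖w‖ * ‖x - T‖ := by
        nlinarith [key, h5]
      exact le_of_mul_le_mul_right h6 hn
end

section
/- Let f ∈ Γ₀(X) be p-conditioned with constant γ > 0 on a convex set Ω ⊂ X satisfying proj(Ω, argmin f) ⊊ Ω, and suppose f is differentiable on Ω with ∇f α-Hölder continuous on Ω (constant L). Then p ≥ α + 1; moreover if p = α + 1, then γ ≤ L. -/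
open Set Metric

variable {X : Type*} [NormedAddCommGroup X] [InnerProductSpace ℝ X] [CompleteSpace X]

/-- Proposition 4.11: if `f` is `p`-conditioned with constant `γ` on a convex set `Ω`
with `proj(Ω, argmin f) ⊊ Ω`, and `f` is differentiable on `Ω` with `α`-Hölder gradient
(constant `L`), then `p ≥ α + 1`; and if `p = α + 1` then `γ ≤ L`. -/
theorem stmt15 (f : X → ℝ) (hconv : ConvexOn ℝ univ f)
    (hlsc : LowerSemicontinuous f) (Ω : Set X) (hΩ : Convex ℝ Ω)
    (p γ α L : ℝ) (hp : 1 ≤ p) (hγ : 0 < γ) (hα : 0 < α) (hL : 0 < L)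
    (hmin : {z : X | ∀ y, f z ≤ f y}.Nonempty)
    (f' : X → X) (hdiff : ∀ x ∈ Ω, HasGradientAt f (f' x) x)
    (hhold : ∀ x ∈ Ω, ∀ y ∈ Ω, ‖f' x - f' y‖ ≤ L * ‖x - y‖ ^ α)
    (hcond : ∀ x ∈ Ω, γ / p * infDist x {z : X | ∀ y, f z ≤ f y} ^ p ≤ f x - ⨅ y, f y)
    (hproj : {y | ∃ x ∈ Ω, y ∈ {z : X | ∀ w, f z ≤ f w} ∧
        dist x y = infDist x {z : X | ∀ w, f z ≤ f w}} ⊂ Ω) :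
    α + 1 ≤ p ∧ (p = α + 1 → γ ≤ L) := by
  classical
  have hppos : (0:ℝ) < p := lt_of_lt_of_le one_pos hp
  set S : Set X := {z : X | ∀ y, f z ≤ f y} with hSdef
  have hSeq : S = ⋂ y, {z : X | f z ≤ f y} := by
    ext z; simp [hSdef, Set.mem_iInter]
  have hSclosed : IsClosed S := by
    rw [hSeq]
    exact isClosed_iInter fun y => hlsc.isClosed_preimage (f y)
  have hSconv : Convex ℝ S := by
    rw [hSeq]
    exact convex_iInter fun y => by simpa using hconv.convex_le (f y)
  -- point of Ω which is not a projection
  obtain ⟨x, hxΩ, hxP⟩ := exists_of_ssubset hproj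
  -- projection of x onto S
  obtain ⟨xs, hxsS, hxsdist⟩ :=
    exists_norm_eq_iInf_of_complete_convex hmin hSclosed.isComplete hSconv x
  have hproj_eq : dist x xs = infDist x S := by
    apply le_antisymm
    · rw [Metric.infDist_eq_iInf, dist_eq_norm, hxsdist]
      simp_rw [dist_eq_norm]
      exact le_refl _
    · exact Metric.infDist_le_dist_of_mem hxsS
  have hxsΩ : xs ∈ Ω := hproj.1 ⟨x, hxΩ, hxsS, hproj_eq⟩
  set d : ℝ := dist x xs with hd
  have hdpos : 0 < d := by
    rcases (dist_nonneg : (0:ℝ) ≤ d).lt_or_eq with h | h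
    · exact h
    · exfalso
      have hxxs : x = xs := by
        have : dist x xs = 0 := h.symm
        rwa [dist_eq_zero] at this
      apply hxP
      refine ⟨x, hxΩ, by rw [hxxs]; exact hxsS, ?_⟩
      rw [Metric.infDist_zero_of_mem (by rw [hxxs]; exact hxsS), dist_self]
  have hinf : (⨅ y, f y) = f xs := by
    apply le_antisymm
    · refine ciInf_le ⟨f xs, ?_⟩ xs
      rintro v ⟨y, rfl⟩
      exact hxsS y
    · exact le_ciInf hxsS
  have hgrad0 : f' xs = 0 := by
    have hlm : IsLocalMin f xs := Filter.Eventually.of_forall hxsS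
    have h0 := hlm.hasFDerivAt_eq_zero (hdiff xs hxsΩ).hasFDerivAt
    exact (LinearIsometryEquiv.map_eq_zero_iff _).mp h0
  set u : X := x - xs with hu
  have hnu : ‖u‖ = d := by rw [hu, hd, dist_eq_norm]
  -- points on the segment
  have hmem : ∀ s ∈ Icc (0:ℝ) 1, xs + s • u ∈ Ω := by
    intro s hs
    have heq : xs + s • u = (1 - s) • xs + s • x := by rw [hu]; module
    rw [heq]
    exact hΩ hxsΩ hxΩ (by linarith [hs.2]) hs.1 (by ring)
  -- lower bound on infDist along the segment
  have hlow : ∀ s ∈ Icc (0:ℝ) 1, s * d ≤ infDist (xs + s • u) S := by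
    intro s hs
    haveI : Nonempty S := hmin.to_subtype
    rw [Metric.infDist_eq_iInf]
    refine le_ciInf fun z => ?_
    have h1 : d ≤ dist x (z : X) := by
      rw [hproj_eq]; exact Metric.infDist_le_dist_of_mem z.2
    have h2 : dist x (xs + s • u) = (1 - s) * d := by
      have heq : x - (xs + s • u) = (1 - s) • u := by rw [hu]; module
      rw [dist_eq_norm, heq, norm_smul, Real.norm_eq_abs,
        abs_of_nonneg (by linarith [hs.2]), hnu]
    have h3 := dist_triangle x (xs + s • u) (z : X)
    have := h1.trans h3
    rw [h2] at this
    nlinarith [hs.1, hs.2]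
  -- derivative along the segment
  have hderiv : ∀ s ∈ Icc (0:ℝ) 1,
      HasDerivAt (fun r : ℝ => f (xs + r • u)) (inner ℝ (f' (xs + s • u)) u : ℝ) s := by
    intro s hs
    have hc : HasDerivAt (fun r : ℝ => xs + r • u) u s := by
      simpa using ((hasDerivAt_id s).smul_const u).const_add xs
    have hF := (hdiff _ (hmem s hs)).hasFDerivAt
    have h := hF.comp_hasDerivAt s hc
    simpa [InnerProductSpace.toDual_apply_apply, Function.comp_def] using h
  -- continuity of the derivative along the segment
  have hcont : ContinuousOn (fun s : ℝ => (inner ℝ (f' (xs + s • u)) u : ℝ)) (Icc (0:ℝ) 1) := by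
    have hH : HolderOnWith (L * d ^ α).toNNReal ⟨α, hα.le⟩
        (fun s : ℝ => f' (xs + s • u)) (Icc (0:ℝ) 1) := by
      intro a ha b hb
      have hdist : dist (f' (xs + a • u)) (f' (xs + b • u)) ≤ (L * d ^ α) * |a - b| ^ α := by
        have h1 := hhold _ (hmem a ha) _ (hmem b hb)
        have heq : xs + a • u - (xs + b • u) = (a - b) • u := by module
        rw [dist_eq_norm]
        calc ‖f' (xs + a•u) - f' (xs + b•u)‖ ≤ L * ‖xs + a•u - (xs + b•u)‖ ^ α := h1
          _ = L * (|a - b| * d) ^ α := by rw [heq, norm_smul, Real.norm_eq_abs, hnu]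
          _ = (L * d ^ α) * |a - b| ^ α := by
              rw [Real.mul_rpow (abs_nonneg _) hdpos.le]; ring
      rw [edist_dist, edist_dist, Real.dist_eq]
      refine le_trans (ENNReal.ofReal_le_ofReal hdist) (le_of_eq ?_)
      rw [ENNReal.ofReal_mul (by positivity),
        ← ENNReal.ofReal_rpow_of_nonneg (abs_nonneg _) hα.le]
      rfl
    have h1 : ContinuousOn (fun s : ℝ => f' (xs + s • u)) (Icc (0:ℝ) 1) :=
      hH.continuousOn (by exact_mod_cast hα)
    exact h1.inner continuousOn_const
  -- the key inequality
  have key : ∀ t ∈ Ioc (0:ℝ) 1, γ / p * (t * d) ^ p ≤ L / (α + 1) * (t * d) ^ (α + 1) := by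
    intro t ht
    have ht0 : 0 ≤ t := ht.1.le
    have hsub : Icc (0:ℝ) t ⊆ Icc 0 1 := Icc_subset_Icc le_rfl ht.2
    have huIcc : uIcc (0:ℝ) t = Icc 0 t := uIcc_of_le ht0
    have hφint : IntervalIntegrable (fun s : ℝ => (inner ℝ (f' (xs + s • u)) u : ℝ))
        MeasureTheory.volume 0 t := by
      apply ContinuousOn.intervalIntegrable
      rw [huIcc]; exact hcont.mono hsub
    have hftc : f (xs + t • u) - f xs
        = ∫ s in (0:ℝ)..t, (inner ℝ (f' (xs + s • u)) u : ℝ) := by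
      have h := intervalIntegral.integral_eq_sub_of_hasDerivAt
        (fun s hs => hderiv s (hsub (huIcc ▸ hs))) hφint
      simp only [zero_smul, add_zero] at h
      linarith [h]
    have hψint : IntervalIntegrable (fun s : ℝ => L * d ^ α * d * s ^ α)
        MeasureTheory.volume 0 t := by
      apply Continuous.intervalIntegrable
      exact continuous_const.mul (continuous_iff_continuousAt.mpr fun y =>
        Real.continuousAt_rpow_const y α (Or.inr hα.le))
    have hbound : ∀ s ∈ Icc (0:ℝ) t,
        (inner ℝ (f' (xs + s • u)) u : ℝ) ≤ L * d ^ α * d * s ^ α := by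
      intro s hs
      have hsmem : s ∈ Icc (0:ℝ) 1 := hsub hs
      have h3 : ‖f' (xs + s•u) - f' xs‖ ≤ L * ‖xs + s•u - xs‖ ^ α :=
        hhold _ (hmem s hsmem) _ hxsΩ
      have h4 : ‖xs + s•u - xs‖ = s * d := by
        rw [add_sub_cancel_left, norm_smul, Real.norm_eq_abs, abs_of_nonneg hs.1, hnu]
      have h5 : (s * d) ^ α = s ^ α * d ^ α := Real.mul_rpow hs.1 hdpos.le
      calc (inner ℝ (f' (xs + s • u)) u : ℝ) ≤ ‖f' (xs + s • u)‖ * ‖u‖ := real_inner_le_norm _ _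
        _ = ‖f' (xs + s•u) - f' xs‖ * d := by rw [hgrad0, sub_zero, hnu]
        _ ≤ (L * (s ^ α * d ^ α)) * d := by
            refine mul_le_mul_of_nonneg_right ?_ hdpos.le
            rw [← h5, ← h4]; exact h3
        _ = L * d ^ α * d * s ^ α := by ring
    have hcmp : (∫ s in (0:ℝ)..t, (inner ℝ (f' (xs + s • u)) u : ℝ))
        ≤ ∫ s in (0:ℝ)..t, L * d ^ α * d * s ^ α :=
      intervalIntegral.integral_mono_on ht0 hφint hψint hbound
    have hval : (∫ s in (0:ℝ)..t, L * d ^ α * d * s ^ α)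
        = L * d ^ α * d * (t ^ (α+1) / (α+1)) := by
      rw [intervalIntegral.integral_const_mul, integral_rpow (Or.inl (by linarith))]
      rw [Real.zero_rpow (by linarith)]
      ring
    have hc1 := hcond _ (hmem t (Ioc_subset_Icc_self ht))
    have h6 : (t * d) ^ p ≤ infDist (xs + t • u) S ^ p :=
      Real.rpow_le_rpow (by positivity) (hlow t (Ioc_subset_Icc_self ht)) hppos.le
    have h7 : γ / p * (t * d) ^ p ≤ f (xs + t • u) - f xs := by
      rw [← hinf]
      exact le_trans (mul_le_mul_of_nonneg_left h6 (by positivity)) hc1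
    have h8 : f (xs + t • u) - f xs ≤ L / (α+1) * (t*d)^(α+1) := by
      rw [hftc]
      refine hcmp.trans (le_of_eq ?_)
      rw [hval, Real.mul_rpow ht0 hdpos.le, Real.rpow_add_one (ne_of_gt hdpos)]
      field_simp
    linarith
  constructor
  · by_contra hlt
    push_neg at hlt
    set ε : ℝ := α + 1 - p with hε
    have hεpos : 0 < ε := by simp only [hε]; linarith
    set K : ℝ := L / (α + 1) with hK
    have hKpos : 0 < K := by rw [hK]; positivity
    set B : ℝ := γ / p with hB
    have hBpos : 0 < B := by rw [hB]; positivity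
    set c0 : ℝ := min d ((B / (2 * K)) ^ (1/ε)) with hc0
    have hc0pos : 0 < c0 := lt_min hdpos (Real.rpow_pos_of_pos (by positivity) _)
    have hc0d : c0 ≤ d := min_le_left _ _
    have ht : c0 / d ∈ Ioc (0:ℝ) 1 :=
      ⟨by positivity, by rw [div_le_one hdpos]; exact hc0d⟩
    have hkey := key _ ht
    rw [div_mul_cancel₀ _ (ne_of_gt hdpos)] at hkey
    have hsplit : c0 ^ (α+1) = c0 ^ p * c0 ^ ε := by
      rw [← Real.rpow_add hc0pos]
      congr 1
      rw [hε]; ring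
    have hcε : c0 ^ ε ≤ B / (2*K) := by
      calc c0 ^ ε ≤ ((B / (2*K)) ^ (1/ε)) ^ ε :=
            Real.rpow_le_rpow hc0pos.le (min_le_right _ _) hεpos.le
        _ = B / (2*K) := by
            rw [← Real.rpow_mul (by positivity), one_div_mul_cancel (ne_of_gt hεpos),
              Real.rpow_one]
    have hcp : (0:ℝ) < c0 ^ p := Real.rpow_pos_of_pos hc0pos _
    have hBK : B ≤ K * c0 ^ ε := by
      rw [hsplit] at hkey
      nlinarith [hkey, hcp]
    have hfin : B ≤ B / 2 := by
      calc B ≤ K * c0 ^ ε := hBK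
        _ ≤ K * (B / (2*K)) := mul_le_mul_of_nonneg_left hcε hKpos.le
        _ = B / 2 := by field_simp
    linarith
  · intro hpe
    have hkey := key 1 ⟨one_pos, le_rfl⟩
    rw [one_mul, hpe] at hkey
    have hdp : (0:ℝ) < d ^ (α+1) := Real.rpow_pos_of_pos hdpos _
    have h9 : γ / (α+1) ≤ L / (α+1) := le_of_mul_le_mul_right hkey hdp
    have hα1 : (0:ℝ) < α + 1 := by linarith
    calc γ = γ / (α+1) * (α+1) := by field_simp
      _ ≤ L / (α+1) * (α+1) := mul_le_mul_of_nonneg_right h9 hα1.le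
      _ = L := by field_simp
end

section
/- Let X = ℓ²(ℕ) with canonical basis (e_k), let (σ_k) be strictly positive reals converging to 0, let A : X → X be the diagonal operator Ax = Σ σ_k x_k e_k, and f(x) = (1/2)‖Ax‖². Fix μ, δ > 0 and suppose f satisfies the p-Łojasiewicz inequality with constant c on the set X_{μ,δ}(0) (which contains all v^k := δσ_k^{2μ}e_k): (½‖Ax‖²)^{1-1/p} ≤ c‖A*Ax‖ for all such x. Then p ≥ 2 + 1/μ, and if p = 2 + 1/μ then c ≥ 2^{-(μ+1)/(2μ+1)}·δ^{1/(1+2μ)}. -/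
open Real Filter

/-- Optimality part of Theorem 5.7: on `X = ℓ²(ℕ)` with the diagonal operator
`Ax = Σ σₖ xₖ eₖ` (with `σₖ > 0`, `σₖ → 0`) and `f(x) = (1/2)‖Ax‖²`, if `f` satisfies
the `p`-Łojasiewicz inequality with constant `c` on the source set
`X_{μ,δ}(0) = {(A*A)^μ w : ‖w‖ ≤ δ}` (i.e. `{x | xₖ = σₖ^{2μ} wₖ, ‖w‖ ≤ δ}`), then
`p ≥ 2 + 1/μ`, and if `p = 2 + 1/μ` then `c ≥ 2^{-(μ+1)/(2μ+1)}·δ^{1/(1+2μ)}`. -/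
theorem stmt19 (σ : ℕ → ℝ) (hσ : ∀ k, 0 < σ k)
    (hσ0 : Filter.Tendsto σ Filter.atTop (nhds 0))
    (A : lp (fun _ : ℕ => ℝ) 2 →L[ℝ] lp (fun _ : ℕ => ℝ) 2)
    (hA : ∀ (x : lp (fun _ : ℕ => ℝ) 2) (k : ℕ), A x k = σ k * x k)
    (μ δ p c : ℝ) (hμ : 0 < μ) (hδ : 0 < δ) (hp : 0 < p) (hc : 0 < c)
    (hLoj : ∀ x : lp (fun _ : ℕ => ℝ) 2,
      (∃ w : lp (fun _ : ℕ => ℝ) 2, ‖w‖ ≤ δ ∧ ∀ k, x k = σ k ^ (2 * μ) * w k) →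
      ((1:ℝ)/2 * ‖A x‖ ^ 2) ^ (1 - 1/p)
        ≤ c * ‖((ContinuousLinearMap.adjoint A).comp A) x‖) :
    2 + 1/μ ≤ p ∧
    (p = 2 + 1/μ →
      (2:ℝ) ^ (-((μ + 1) / (2 * μ + 1))) * δ ^ ((1:ℝ) / (1 + 2 * μ)) ≤ c) := by
  classical
  -- A is diagonal on basis vectors
  have hA1 : ∀ (k : ℕ) (s : ℝ), A (lp.single 2 k s) = lp.single 2 k (σ k * s) := by
    intro k s
    apply lp.ext
    funext j
    show A (lp.single 2 k s) j = _
    rw [hA]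
    by_cases hj : j = k
    · subst hj
      rw [lp.single_apply_self (E := fun _ : ℕ => ℝ), lp.single_apply_self (E := fun _ : ℕ => ℝ)]
    · rw [lp.single_apply_ne (E := fun _ : ℕ => ℝ) 2 k s hj,
        lp.single_apply_ne (E := fun _ : ℕ => ℝ) 2 k _ hj, mul_zero]
  -- the adjoint is diagonal too
  have hadj : ∀ (y : lp (fun _ : ℕ => ℝ) 2) (j : ℕ),
      (ContinuousLinearMap.adjoint A) y j = σ j * y j := by
    intro y j
    have h1 : (inner ℝ ((ContinuousLinearMap.adjoint A) y) (lp.single 2 j (1:ℝ)) : ℝ)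
        = (ContinuousLinearMap.adjoint A) y j := by
      rw [lp.inner_single_right]
      simp [RCLike.inner_apply]
    have h2 : (inner ℝ ((ContinuousLinearMap.adjoint A) y) (lp.single 2 j (1:ℝ)) : ℝ)
        = inner ℝ y (A (lp.single 2 j (1:ℝ))) := ContinuousLinearMap.adjoint_inner_left A _ _
    rw [hA1] at h2
    have h3 : (inner ℝ y (lp.single 2 j (σ j * 1)) : ℝ) = y j * (σ j * 1) := by
      rw [lp.inner_single_right]
      simp [RCLike.inner_apply, mul_comm]
    rw [← h1, h2, h3]
    ring
  have hAA : ∀ (k : ℕ) (s : ℝ),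
      ((ContinuousLinearMap.adjoint A).comp A) (lp.single 2 k s)
        = lp.single 2 k (σ k * (σ k * s)) := by
    intro k s
    apply lp.ext
    funext j
    show ((ContinuousLinearMap.adjoint A) (A (lp.single 2 k s))) j = _
    rw [hA1, hadj]
    by_cases hj : j = k
    · subst hj
      rw [lp.single_apply_self (E := fun _ : ℕ => ℝ), lp.single_apply_self (E := fun _ : ℕ => ℝ)]
    · rw [lp.single_apply_ne (E := fun _ : ℕ => ℝ) 2 k _ hj,
        lp.single_apply_ne (E := fun _ : ℕ => ℝ) 2 k _ hj, mul_zero]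
  have hnorm : ∀ (k : ℕ) (a : ℝ), ‖lp.single (E := fun _ : ℕ => ℝ) 2 k a‖ = |a| := by
    intro k a
    have := lp.norm_single (E := fun _ : ℕ => ℝ) (p := 2) (by norm_num) k a
    simpa using this
  -- the key inequality obtained from the vectors v^k = δ σ_k^{2μ} e_k
  have key : ∀ k : ℕ, (δ^2/2) ^ (1 - 1/p) * σ k ^ ((4*μ+2)*(1 - 1/p))
      ≤ c * δ * σ k ^ (2*μ+2) := by
    intro k
    have ht : 0 < σ k := hσ k
    have htm : 0 < σ k ^ (2*μ) := rpow_pos_of_pos ht _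
    set t := σ k with htdef
    have hmem : ∃ w : lp (fun _ : ℕ => ℝ) 2, ‖w‖ ≤ δ ∧
        ∀ j, (lp.single 2 k (δ * t ^ (2*μ)) : lp (fun _ : ℕ => ℝ) 2) j
          = σ j ^ (2 * μ) * w j := by
      refine ⟨lp.single 2 k δ, ?_, ?_⟩
      · rw [hnorm, abs_of_pos hδ]
      · intro j
        by_cases hj : j = k
        · subst hj
          rw [lp.single_apply_self (E := fun _ : ℕ => ℝ),
            lp.single_apply_self (E := fun _ : ℕ => ℝ)]
          ring
        · rw [lp.single_apply_ne (E := fun _ : ℕ => ℝ) 2 k _ hj,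
            lp.single_apply_ne (E := fun _ : ℕ => ℝ) 2 k _ hj, mul_zero]
    have h := hLoj _ hmem
    rw [hA1, hAA, hnorm, hnorm] at h
    have hs : 0 < δ * t ^ (2*μ) := by positivity
    rw [abs_of_pos (by positivity), abs_of_pos (by positivity)] at h
    -- rewrite both sides
    have e1 : (1:ℝ)/2 * (t * (δ * t ^ (2*μ)))^2 = (δ^2/2) * t ^ (4*μ+2) := by
      have h11 : t * t = t ^ (2:ℝ) := by
        have h12 := Real.rpow_natCast t 2
        push_cast at h12
        rw [h12]; ring
      have : t ^ (4*μ+2) = t ^ (2*μ) * t ^ (2*μ) * (t * t) := by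
        rw [h11, ← Real.rpow_add ht, ← Real.rpow_add ht]
        congr 1
        ring
      rw [this]; ring
    have e2 : ((δ^2/2) * t ^ (4*μ+2)) ^ (1 - 1/p)
        = (δ^2/2) ^ (1 - 1/p) * t ^ ((4*μ+2)*(1 - 1/p)) := by
      rw [Real.mul_rpow (by positivity) (by positivity), ← Real.rpow_mul ht.le]
    have e3 : c * (σ k * (σ k * (δ * t ^ (2*μ)))) = c * δ * t ^ (2*μ+2) := by
      rw [← htdef]
      have h11 : t * t = t ^ (2:ℝ) := by
        have h12 := Real.rpow_natCast t 2
        push_cast at h12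
        rw [h12]; ring
      have : t ^ (2*μ+2) = t ^ (2*μ) * (t * t) := by
        rw [h11, ← Real.rpow_add ht]
      rw [this]; ring
    rw [e1, e2, e3] at h
    exact h
  have hC : 0 < (δ^2/2) ^ (1 - 1/p) := rpow_pos_of_pos (by positivity) _
  -- Part 1 : p ≥ 2 + 1/μ
  have part1 : 2 + 1/μ ≤ p := by
    by_contra hcon
    push_neg at hcon
    have hμp : μ * p < 2*μ + 1 := by
      have h1 := mul_lt_mul_of_pos_left hcon hμ
      have h2 : μ * (2 + 1/μ) = 2*μ + 1 := by field_simp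
      linarith
    have hβα : 0 < (2*μ+2) - (4*μ+2)*(1 - 1/p) := by
      have h3 : 2*μ < (4*μ+2)/p := by
        rw [lt_div_iff₀ hp]; nlinarith
      have h4 : (4*μ+2)*(1 - 1/p) = (4*μ+2) - (4*μ+2)/p := by
        rw [mul_sub, mul_one, mul_one_div]
      linarith
    set e := (2*μ+2) - (4*μ+2)*(1 - 1/p) with hedef
    have key3 : ∀ k : ℕ, (δ^2/2) ^ (1 - 1/p) ≤ c * δ * σ k ^ e := by
      intro k
      have ht : 0 < σ k := hσ k
      have hsplit : c * δ * σ k ^ (2*μ+2) = c * δ * σ k ^ e * σ k ^ ((4*μ+2)*(1 - 1/p)) := by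
        rw [mul_assoc (c*δ), ← Real.rpow_add ht]
        congr 1
        congr 1
        rw [hedef]; ring
      have hk := key k
      rw [hsplit] at hk
      exact le_of_mul_le_mul_right hk (rpow_pos_of_pos ht _)
    have hlim0 : Tendsto (fun k => σ k ^ e) atTop (nhds 0) := by
      have hcont := (Real.continuousAt_rpow_const 0 e (Or.inr hβα.le)).tendsto.comp hσ0
      simpa [Function.comp_def, Real.zero_rpow hβα.ne'] using hcont
    have hlim : Tendsto (fun k => c * δ * σ k ^ e) atTop (nhds 0) := by
      simpa using hlim0.const_mul (c * δ)
    have := ge_of_tendsto' hlim key3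
    linarith
  refine ⟨part1, ?_⟩
  -- Part 2 : the constant bound when p = 2 + 1/μ
  intro hpe
  have hE : 1 - 1/p = (μ+1)/(2*μ+1) := by
    rw [hpe]
    field_simp
    ring
  have hα : (4*μ+2)*(1 - 1/p) = 2*μ+2 := by
    rw [hE]; field_simp; ring
  have ht : 0 < σ 0 := hσ 0
  have hk := key 0
  rw [hα] at hk
  have hCδ : (δ^2/2) ^ (1 - 1/p) ≤ c * δ :=
    le_of_mul_le_mul_right hk (rpow_pos_of_pos ht _)
  have hCeq : (δ^2/2) ^ (1 - 1/p)
      = (2:ℝ) ^ (-((μ + 1) / (2 * μ + 1))) * δ ^ ((1:ℝ) / (1 + 2 * μ)) * δ := by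
    rw [hE]
    have h1 : (δ^2/2 : ℝ) = δ^2 * 2⁻¹ := by ring
    rw [h1, Real.mul_rpow (by positivity) (by norm_num),
      Real.inv_rpow (by norm_num), ← Real.rpow_neg (by norm_num)]
    have h2 : (δ^2) ^ ((μ+1)/(2*μ+1)) = δ ^ ((1:ℝ) / (1 + 2 * μ)) * δ := by
      rw [← Real.rpow_natCast δ 2, ← Real.rpow_mul hδ.le]
      nth_rewrite 3 [← Real.rpow_one δ]
      rw [← Real.rpow_add hδ]
      congr 1
      push_cast
      field_simp
      ring
    rw [h2]; ring
  rw [hCeq] at hCδ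
  exact le_of_mul_le_mul_right hCδ hδ
end
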